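/- arXiv:1807.06402 — 4 statements merged into one kernel-verified Lean document; each statement's English description precedes it below -/
import Mathlib

section
/- Let X, Y be random vectors in ℝ² supported in [0,1]² with CDFs F₁, F₂. If F₁(s,t) ≤ F₂(s,t) for all (s,t) ∈ [0,1]², then E[φ(X)] ≥ E[φ(Y)] for every bounded continuous function φ : [0,1]² → ℝ that is monotone increasing in each coordinate and submodular (i.e., φ(a∨b) + φ(a∧b) ≤ φ(a) + φ(b) for all a, b). -/
open Set MeasureTheory

lemma fods_tele (f : ℕ → ℝ) {i n : ℕ} (h : i ≤ n) :
    ∑ k ∈ Finset.Ico i n, (f (k + 1) - f k) = f n - f i := by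
  rw [Finset.sum_Ico_eq_sub _ h, Finset.sum_range_sub, Finset.sum_range_sub]
  ring

lemma fods_filter_eq_Ico {n i : ℕ} :
    (Finset.range n).filter (fun k => i ≤ k) = Finset.Ico i n := by
  ext k; simp [Finset.mem_Ico, and_comm]

noncomputable def fodsE (φ : ℝ × ℝ → ℝ) (n : ℕ) (p : ℝ × ℝ) : ℝ :=
  φ (1, 1)
  - ∑ k ∈ Finset.range n, (φ ((↑(k+1) : ℝ)/n, 1) - φ ((k : ℝ)/n, 1)) *
      (Iic (((k : ℝ)/n, (1:ℝ)) : ℝ × ℝ)).indicator 1 p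
  - ∑ l ∈ Finset.range n, (φ (1, (↑(l+1) : ℝ)/n) - φ (1, (l : ℝ)/n)) *
      (Iic (((1:ℝ), (l : ℝ)/n) : ℝ × ℝ)).indicator 1 p
  + ∑ k ∈ Finset.range n, ∑ l ∈ Finset.range n,
      ((φ ((↑(k+1) : ℝ)/n, (↑(l+1) : ℝ)/n) - φ ((k : ℝ)/n, (↑(l+1) : ℝ)/n))
        - (φ ((↑(k+1) : ℝ)/n, (l : ℝ)/n) - φ ((k : ℝ)/n, (l : ℝ)/n))) *
      (Iic (((k : ℝ)/n, (l : ℝ)/n) : ℝ × ℝ)).indicator 1 p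

lemma fodsE_eq (φ : ℝ × ℝ → ℝ) {n : ℕ} (hn : 1 ≤ n) {p : ℝ × ℝ}
    (hp : p ∈ Icc ((0, 0) : ℝ × ℝ) (1, 1)) :
    fodsE φ n p = φ ((⌈p.1 * n⌉₊ : ℝ)/n, (⌈p.2 * n⌉₊ : ℝ)/n) := by
  obtain ⟨⟨hx0, hy0⟩, ⟨hx1, hy1⟩⟩ := hp
  have hx1' : p.1 ≤ 1 := hx1
  have hy1' : p.2 ≤ 1 := hy1
  have hx0' : (0:ℝ) ≤ p.1 := hx0
  have hy0' : (0:ℝ) ≤ p.2 := hy0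
  have hnpos : (0 : ℝ) < n := by exact_mod_cast hn
  set x := p.1 with hxdef
  set y := p.2 with hydef
  set i := ⌈x * n⌉₊ with hidef
  set j := ⌈y * n⌉₊ with hjdef
  have hi : i ≤ n := Nat.ceil_le.2 (by nlinarith)
  have hj : j ≤ n := Nat.ceil_le.2 (by nlinarith)
  have keyx : ∀ k : ℕ, (x ≤ (k : ℝ)/n ↔ i ≤ k) := fun k => by
    rw [le_div_iff₀ hnpos, hidef, Nat.ceil_le]
  have keyy : ∀ l : ℕ, (y ≤ (l : ℝ)/n ↔ j ≤ l) := fun l => by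
    rw [le_div_iff₀ hnpos, hjdef, Nat.ceil_le]
  have hind1 : ∀ k : ℕ, (Iic (((k : ℝ)/n, (1:ℝ)) : ℝ × ℝ)).indicator (1 : ℝ × ℝ → ℝ) p
      = if i ≤ k then 1 else 0 := by
    intro k
    rw [Set.indicator_apply]
    have hmem : p ∈ Iic (((k : ℝ)/n, (1:ℝ)) : ℝ × ℝ) ↔ i ≤ k := by
      simp only [Set.mem_Iic, Prod.le_def, ← hxdef, ← hydef]
      exact ⟨fun h => (keyx k).1 h.1, fun h => ⟨(keyx k).2 h, hy1'⟩⟩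
    simp [hmem]
  have hind2 : ∀ l : ℕ, (Iic (((1:ℝ), (l : ℝ)/n) : ℝ × ℝ)).indicator (1 : ℝ × ℝ → ℝ) p
      = if j ≤ l then 1 else 0 := by
    intro l
    rw [Set.indicator_apply]
    have hmem : p ∈ Iic (((1:ℝ), (l : ℝ)/n) : ℝ × ℝ) ↔ j ≤ l := by
      simp only [Set.mem_Iic, Prod.le_def, ← hxdef, ← hydef]
      exact ⟨fun h => (keyy l).1 h.2, fun h => ⟨hx1', (keyy l).2 h⟩⟩
    simp [hmem]
  have hind3 : ∀ k l : ℕ, (Iic (((k : ℝ)/n, (l : ℝ)/n) : ℝ × ℝ)).indicator (1 : ℝ × ℝ → ℝ) p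
      = if i ≤ k ∧ j ≤ l then 1 else 0 := by
    intro k l
    rw [Set.indicator_apply]
    have hmem : p ∈ Iic (((k : ℝ)/n, (l : ℝ)/n) : ℝ × ℝ) ↔ (i ≤ k ∧ j ≤ l) := by
      simp only [Set.mem_Iic, Prod.le_def, ← hxdef, ← hydef]
      exact and_congr (keyx k) (keyy l)
    simp [hmem]
  have h1 : ∑ k ∈ Finset.range n, (φ ((↑(k+1) : ℝ)/n, 1) - φ ((k : ℝ)/n, 1)) *
      (Iic (((k : ℝ)/n, (1:ℝ)) : ℝ × ℝ)).indicator 1 p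
      = φ ((n : ℝ)/n, 1) - φ ((i : ℝ)/n, 1) := by
    calc ∑ k ∈ Finset.range n, (φ ((↑(k+1) : ℝ)/n, 1) - φ ((k : ℝ)/n, 1)) *
          (Iic (((k : ℝ)/n, (1:ℝ)) : ℝ × ℝ)).indicator 1 p
        = ∑ k ∈ Finset.range n,
            (if i ≤ k then (φ ((↑(k+1) : ℝ)/n, 1) - φ ((k : ℝ)/n, 1)) else 0) :=
          Finset.sum_congr rfl fun k _ => by rw [hind1 k, mul_ite, mul_one, mul_zero]
      _ = ∑ k ∈ Finset.Ico i n, (φ ((↑(k+1) : ℝ)/n, 1) - φ ((k : ℝ)/n, 1)) := by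
          rw [← fods_filter_eq_Ico, Finset.sum_filter]
      _ = φ ((n : ℝ)/n, 1) - φ ((i : ℝ)/n, 1) := fods_tele (fun k => φ ((k : ℝ)/n, 1)) hi
  have h2 : ∑ l ∈ Finset.range n, (φ (1, (↑(l+1) : ℝ)/n) - φ (1, (l : ℝ)/n)) *
      (Iic (((1:ℝ), (l : ℝ)/n) : ℝ × ℝ)).indicator 1 p
      = φ (1, (n : ℝ)/n) - φ (1, (j : ℝ)/n) := by
    calc ∑ l ∈ Finset.range n, (φ (1, (↑(l+1) : ℝ)/n) - φ (1, (l : ℝ)/n)) *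
          (Iic (((1:ℝ), (l : ℝ)/n) : ℝ × ℝ)).indicator 1 p
        = ∑ l ∈ Finset.range n,
            (if j ≤ l then (φ (1, (↑(l+1) : ℝ)/n) - φ (1, (l : ℝ)/n)) else 0) :=
          Finset.sum_congr rfl fun l _ => by rw [hind2 l, mul_ite, mul_one, mul_zero]
      _ = ∑ l ∈ Finset.Ico j n, (φ (1, (↑(l+1) : ℝ)/n) - φ (1, (l : ℝ)/n)) := by
          rw [← fods_filter_eq_Ico, Finset.sum_filter]
      _ = φ (1, (n : ℝ)/n) - φ (1, (j : ℝ)/n) := fods_tele (fun l => φ (1, (l : ℝ)/n)) hj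
  have h3 : ∑ k ∈ Finset.range n, ∑ l ∈ Finset.range n,
      ((φ ((↑(k+1) : ℝ)/n, (↑(l+1) : ℝ)/n) - φ ((k : ℝ)/n, (↑(l+1) : ℝ)/n))
        - (φ ((↑(k+1) : ℝ)/n, (l : ℝ)/n) - φ ((k : ℝ)/n, (l : ℝ)/n))) *
      (Iic (((k : ℝ)/n, (l : ℝ)/n) : ℝ × ℝ)).indicator 1 p
      = (φ ((n : ℝ)/n, (n : ℝ)/n) - φ ((n : ℝ)/n, (j : ℝ)/n))
        - (φ ((i : ℝ)/n, (n : ℝ)/n) - φ ((i : ℝ)/n, (j : ℝ)/n)) := by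
    have inner : ∀ k : ℕ, ∑ l ∈ Finset.range n,
        ((φ ((↑(k+1) : ℝ)/n, (↑(l+1) : ℝ)/n) - φ ((k : ℝ)/n, (↑(l+1) : ℝ)/n))
          - (φ ((↑(k+1) : ℝ)/n, (l : ℝ)/n) - φ ((k : ℝ)/n, (l : ℝ)/n))) *
        (Iic (((k : ℝ)/n, (l : ℝ)/n) : ℝ × ℝ)).indicator 1 p
        = if i ≤ k then
            ((φ ((↑(k+1) : ℝ)/n, (n : ℝ)/n) - φ ((↑(k+1) : ℝ)/n, (j : ℝ)/n))
              - (φ ((k : ℝ)/n, (n : ℝ)/n) - φ ((k : ℝ)/n, (j : ℝ)/n))) else 0 := by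
      intro k
      have step : ∀ l ∈ Finset.range n,
          ((φ ((↑(k+1) : ℝ)/n, (↑(l+1) : ℝ)/n) - φ ((k : ℝ)/n, (↑(l+1) : ℝ)/n))
            - (φ ((↑(k+1) : ℝ)/n, (l : ℝ)/n) - φ ((k : ℝ)/n, (l : ℝ)/n))) *
          (Iic (((k : ℝ)/n, (l : ℝ)/n) : ℝ × ℝ)).indicator 1 p
          = if i ≤ k then (if j ≤ l then
              ((φ ((↑(k+1) : ℝ)/n, (↑(l+1) : ℝ)/n) - φ ((k : ℝ)/n, (↑(l+1) : ℝ)/n))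
                - (φ ((↑(k+1) : ℝ)/n, (l : ℝ)/n) - φ ((k : ℝ)/n, (l : ℝ)/n))) else 0) else 0 := by
        intro l _
        rw [hind3 k l, ite_and, mul_ite, mul_ite, mul_one, mul_zero]
      rw [Finset.sum_congr rfl step]
      by_cases hik : i ≤ k
      · simp only [if_pos hik]
        have t : ∑ l ∈ Finset.Ico j n,
            ((φ ((↑(k+1) : ℝ)/n, (↑(l+1) : ℝ)/n) - φ ((k : ℝ)/n, (↑(l+1) : ℝ)/n))
              - (φ ((↑(k+1) : ℝ)/n, (l : ℝ)/n) - φ ((k : ℝ)/n, (l : ℝ)/n)))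
            = (φ ((↑(k+1) : ℝ)/n, (n : ℝ)/n) - φ ((k : ℝ)/n, (n : ℝ)/n))
              - (φ ((↑(k+1) : ℝ)/n, (j : ℝ)/n) - φ ((k : ℝ)/n, (j : ℝ)/n)) :=
          fods_tele (fun l => φ ((↑(k+1) : ℝ)/n, (l : ℝ)/n) - φ ((k : ℝ)/n, (l : ℝ)/n)) hj
        rw [← fods_filter_eq_Ico, Finset.sum_filter] at t
        rw [t]
        ring
      · simp [hik]
    rw [Finset.sum_congr rfl fun k _ => inner k]
    have t2 : ∑ k ∈ Finset.Ico i n,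
        ((φ ((↑(k+1) : ℝ)/n, (n : ℝ)/n) - φ ((↑(k+1) : ℝ)/n, (j : ℝ)/n))
          - (φ ((k : ℝ)/n, (n : ℝ)/n) - φ ((k : ℝ)/n, (j : ℝ)/n)))
        = (φ ((n : ℝ)/n, (n : ℝ)/n) - φ ((n : ℝ)/n, (j : ℝ)/n))
          - (φ ((i : ℝ)/n, (n : ℝ)/n) - φ ((i : ℝ)/n, (j : ℝ)/n)) :=
      fods_tele (fun k => φ ((k : ℝ)/n, (n : ℝ)/n) - φ ((k : ℝ)/n, (j : ℝ)/n)) hi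
    rw [← fods_filter_eq_Ico, Finset.sum_filter] at t2
    exact t2
  rw [fodsE, h1, h2, h3]
  have hdiv : ((n : ℝ))/n = 1 := div_self (ne_of_gt hnpos)
  rw [hdiv]
  ring

lemma fodsE_integrable (φ : ℝ × ℝ → ℝ) (n : ℕ) (μ : Measure (ℝ × ℝ)) [IsFiniteMeasure μ] :
    Integrable (fodsE φ n) μ := by
  have iInd : ∀ q : ℝ × ℝ, Integrable ((Iic q).indicator (1 : ℝ × ℝ → ℝ)) μ :=
    fun q => (integrable_const 1).indicator measurableSet_Iic
  have iIndc : ∀ (c : ℝ) (q : ℝ × ℝ),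
      Integrable (fun p => c * (Iic q).indicator (1 : ℝ × ℝ → ℝ) p) μ :=
    fun c q => (iInd q).const_mul c
  exact (((integrable_const _).sub
      (integrable_finset_sum _ fun k _ => iIndc _ _)).sub
      (integrable_finset_sum _ fun l _ => iIndc _ _)).add
      (integrable_finset_sum _ fun k _ => integrable_finset_sum _ fun l _ => iIndc _ _)

lemma fodsE_integral (φ : ℝ × ℝ → ℝ) (n : ℕ) (μ : Measure (ℝ × ℝ)) [IsProbabilityMeasure μ] :
    ∫ p, fodsE φ n p ∂μ = φ (1, 1)
      - ∑ k ∈ Finset.range n, (φ ((↑(k+1) : ℝ)/n, 1) - φ ((k : ℝ)/n, 1)) *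
          (μ (Iic (((k : ℝ)/n, (1:ℝ)) : ℝ × ℝ))).toReal
      - ∑ l ∈ Finset.range n, (φ (1, (↑(l+1) : ℝ)/n) - φ (1, (l : ℝ)/n)) *
          (μ (Iic (((1:ℝ), (l : ℝ)/n) : ℝ × ℝ))).toReal
      + ∑ k ∈ Finset.range n, ∑ l ∈ Finset.range n,
          ((φ ((↑(k+1) : ℝ)/n, (↑(l+1) : ℝ)/n) - φ ((k : ℝ)/n, (↑(l+1) : ℝ)/n))
            - (φ ((↑(k+1) : ℝ)/n, (l : ℝ)/n) - φ ((k : ℝ)/n, (l : ℝ)/n))) *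
          (μ (Iic (((k : ℝ)/n, (l : ℝ)/n) : ℝ × ℝ))).toReal := by
  have iInd : ∀ q : ℝ × ℝ, Integrable ((Iic q).indicator (1 : ℝ × ℝ → ℝ)) μ :=
    fun q => (integrable_const 1).indicator measurableSet_Iic
  have iIndc : ∀ (c : ℝ) (q : ℝ × ℝ),
      Integrable (fun p => c * (Iic q).indicator (1 : ℝ × ℝ → ℝ) p) μ :=
    fun c q => (iInd q).const_mul c
  simp only [fodsE]
  have I1 : Integrable (fun p => ∑ k ∈ Finset.range n,
      (φ ((↑(k+1) : ℝ)/n, 1) - φ ((k : ℝ)/n, 1)) *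
      (Iic (((k : ℝ)/n, (1:ℝ)) : ℝ × ℝ)).indicator 1 p) μ :=
    integrable_finset_sum _ fun k _ => iIndc _ _
  have I2 : Integrable (fun p => ∑ l ∈ Finset.range n,
      (φ (1, (↑(l+1) : ℝ)/n) - φ (1, (l : ℝ)/n)) *
      (Iic (((1:ℝ), (l : ℝ)/n) : ℝ × ℝ)).indicator 1 p) μ :=
    integrable_finset_sum _ fun l _ => iIndc _ _
  have I3 : Integrable (fun p => ∑ k ∈ Finset.range n, ∑ l ∈ Finset.range n,
      ((φ ((↑(k+1) : ℝ)/n, (↑(l+1) : ℝ)/n) - φ ((k : ℝ)/n, (↑(l+1) : ℝ)/n))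
        - (φ ((↑(k+1) : ℝ)/n, (l : ℝ)/n) - φ ((k : ℝ)/n, (l : ℝ)/n))) *
      (Iic (((k : ℝ)/n, (l : ℝ)/n) : ℝ × ℝ)).indicator 1 p) μ :=
    integrable_finset_sum _ fun k _ => integrable_finset_sum _ fun l _ => iIndc _ _
  have I0 : Integrable (fun _ : ℝ × ℝ => φ (1, 1)) μ := integrable_const _
  have I01 : Integrable (fun p => φ (1, 1) - ∑ k ∈ Finset.range n,
      (φ ((↑(k+1) : ℝ)/n, 1) - φ ((k : ℝ)/n, 1)) *
      (Iic (((k : ℝ)/n, (1:ℝ)) : ℝ × ℝ)).indicator 1 p) μ := by exact I0.sub I1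
  have I012 : Integrable (fun p => (φ (1, 1) - ∑ k ∈ Finset.range n,
      (φ ((↑(k+1) : ℝ)/n, 1) - φ ((k : ℝ)/n, 1)) *
      (Iic (((k : ℝ)/n, (1:ℝ)) : ℝ × ℝ)).indicator 1 p)
      - ∑ l ∈ Finset.range n, (φ (1, (↑(l+1) : ℝ)/n) - φ (1, (l : ℝ)/n)) *
      (Iic (((1:ℝ), (l : ℝ)/n) : ℝ × ℝ)).indicator 1 p) μ := by exact I01.sub I2
  rw [integral_add I012 I3, integral_sub I01 I2, integral_sub I0 I1, integral_const,
    integral_finset_sum _ (fun k _ => iIndc _ _),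
    integral_finset_sum _ (fun l _ => iIndc _ _),
    integral_finset_sum _ (fun k _ => integrable_finset_sum _ fun l _ => iIndc _ _)]
  simp only [integral_finset_sum _ (fun l _ => iIndc _ _), integral_const_mul,
    integral_indicator_one measurableSet_Iic, measureReal_def, measure_univ, ENNReal.toReal_one, one_smul]


lemma fodsE_mono (μ ν : Measure (ℝ × ℝ)) [IsProbabilityMeasure μ] [IsProbabilityMeasure ν]
    (hle : ∀ s ∈ Icc (0 : ℝ) 1, ∀ t ∈ Icc (0 : ℝ) 1,
      (μ (Iic ((s, t) : ℝ × ℝ))).toReal ≤ (ν (Iic ((s, t) : ℝ × ℝ))).toReal)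
    (φ : ℝ × ℝ → ℝ)
    (hm₁ : ∀ y : ℝ, Monotone fun x : ℝ => φ (x, y))
    (hm₂ : ∀ x : ℝ, Monotone fun y : ℝ => φ (x, y))
    (hsub : ∀ a b : ℝ × ℝ, φ (a ⊔ b) + φ (a ⊓ b) ≤ φ a + φ b)
    {n : ℕ} (hn : 1 ≤ n) :
    ∫ p, fodsE φ n p ∂ν ≤ ∫ p, fodsE φ n p ∂μ := by
  have hnpos : (0 : ℝ) < n := by exact_mod_cast hn
  have hmem : ∀ k ∈ Finset.range n, ((k : ℝ)/n) ∈ Icc (0:ℝ) 1 := by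
    intro k hk
    have hkn : (k : ℝ) ≤ n := by exact_mod_cast (Finset.mem_range.1 hk).le
    exact ⟨div_nonneg (Nat.cast_nonneg _) hnpos.le, (div_le_one hnpos).2 hkn⟩
  have hone : (1:ℝ) ∈ Icc (0:ℝ) 1 := ⟨zero_le_one, le_refl 1⟩
  have hstep : ∀ k : ℕ, ((k : ℝ)/n) ≤ ((↑(k+1) : ℝ)/n) := by
    intro k
    gcongr
    linarith
  rw [fodsE_integral, fodsE_integral]
  have h1 : ∑ k ∈ Finset.range n, (φ ((↑(k+1) : ℝ)/n, 1) - φ ((k : ℝ)/n, 1)) *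
        (μ (Iic (((k : ℝ)/n, (1:ℝ)) : ℝ × ℝ))).toReal
      ≤ ∑ k ∈ Finset.range n, (φ ((↑(k+1) : ℝ)/n, 1) - φ ((k : ℝ)/n, 1)) *
        (ν (Iic (((k : ℝ)/n, (1:ℝ)) : ℝ × ℝ))).toReal := by
    refine Finset.sum_le_sum fun k hk => ?_
    exact mul_le_mul_of_nonneg_left (hle _ (hmem k hk) _ hone)
      (sub_nonneg.2 (hm₁ 1 (hstep k)))
  have h2 : ∑ l ∈ Finset.range n, (φ (1, (↑(l+1) : ℝ)/n) - φ (1, (l : ℝ)/n)) *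
        (μ (Iic (((1:ℝ), (l : ℝ)/n) : ℝ × ℝ))).toReal
      ≤ ∑ l ∈ Finset.range n, (φ (1, (↑(l+1) : ℝ)/n) - φ (1, (l : ℝ)/n)) *
        (ν (Iic (((1:ℝ), (l : ℝ)/n) : ℝ × ℝ))).toReal := by
    refine Finset.sum_le_sum fun l hl => ?_
    exact mul_le_mul_of_nonneg_left (hle _ hone _ (hmem l hl))
      (sub_nonneg.2 (hm₂ 1 (hstep l)))
  have h3 : ∑ k ∈ Finset.range n, ∑ l ∈ Finset.range n,
        ((φ ((↑(k+1) : ℝ)/n, (↑(l+1) : ℝ)/n) - φ ((k : ℝ)/n, (↑(l+1) : ℝ)/n))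
          - (φ ((↑(k+1) : ℝ)/n, (l : ℝ)/n) - φ ((k : ℝ)/n, (l : ℝ)/n))) *
        (ν (Iic (((k : ℝ)/n, (l : ℝ)/n) : ℝ × ℝ))).toReal
      ≤ ∑ k ∈ Finset.range n, ∑ l ∈ Finset.range n,
        ((φ ((↑(k+1) : ℝ)/n, (↑(l+1) : ℝ)/n) - φ ((k : ℝ)/n, (↑(l+1) : ℝ)/n))
          - (φ ((↑(k+1) : ℝ)/n, (l : ℝ)/n) - φ ((k : ℝ)/n, (l : ℝ)/n))) *
        (μ (Iic (((k : ℝ)/n, (l : ℝ)/n) : ℝ × ℝ))).toReal := by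
    refine Finset.sum_le_sum fun k hk => Finset.sum_le_sum fun l hl => ?_
    have hcsub : (φ ((↑(k+1) : ℝ)/n, (↑(l+1) : ℝ)/n) - φ ((k : ℝ)/n, (↑(l+1) : ℝ)/n))
        - (φ ((↑(k+1) : ℝ)/n, (l : ℝ)/n) - φ ((k : ℝ)/n, (l : ℝ)/n)) ≤ 0 := by
      have h := hsub (((k : ℝ)/n, (↑(l+1) : ℝ)/n)) (((↑(k+1) : ℝ)/n, (l : ℝ)/n))
      have hsupp : (((k : ℝ)/n, (↑(l+1) : ℝ)/n) : ℝ × ℝ) ⊔ (((↑(k+1) : ℝ)/n, (l : ℝ)/n))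
          = (((↑(k+1) : ℝ)/n, (↑(l+1) : ℝ)/n) : ℝ × ℝ) := by
        have : (((k : ℝ)/n, (↑(l+1) : ℝ)/n) : ℝ × ℝ) ⊔ (((↑(k+1) : ℝ)/n, (l : ℝ)/n))
            = ((k : ℝ)/n ⊔ (↑(k+1) : ℝ)/n, (↑(l+1) : ℝ)/n ⊔ (l : ℝ)/n) := rfl
        rw [this, sup_eq_right.2 (hstep k), sup_eq_left.2 (hstep l)]
      have hinfp : (((k : ℝ)/n, (↑(l+1) : ℝ)/n) : ℝ × ℝ) ⊓ (((↑(k+1) : ℝ)/n, (l : ℝ)/n))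
          = (((k : ℝ)/n, (l : ℝ)/n) : ℝ × ℝ) := by
        have : (((k : ℝ)/n, (↑(l+1) : ℝ)/n) : ℝ × ℝ) ⊓ (((↑(k+1) : ℝ)/n, (l : ℝ)/n))
            = ((k : ℝ)/n ⊓ (↑(k+1) : ℝ)/n, (↑(l+1) : ℝ)/n ⊓ (l : ℝ)/n) := rfl
        rw [this, inf_eq_left.2 (hstep k), inf_eq_right.2 (hstep l)]
      rw [hsupp, hinfp] at h
      linarith
    have hkn := (hmem k hk)
    have hln := (hmem l hl)
    exact mul_le_mul_of_nonpos_left (hle _ hkn _ hln) hcsub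
  linarith

theorem first_order_dominance_submodular_general
    (μ ν : Measure (ℝ × ℝ)) [IsProbabilityMeasure μ] [IsProbabilityMeasure ν]
    (hsμ : μ (Icc ((0, 0) : ℝ × ℝ) (1, 1))ᶜ = 0)
    (hsν : ν (Icc ((0, 0) : ℝ × ℝ) (1, 1))ᶜ = 0)
    (hle : ∀ s ∈ Icc (0 : ℝ) 1, ∀ t ∈ Icc (0 : ℝ) 1,
      (μ (Iic ((s, t) : ℝ × ℝ))).toReal ≤ (ν (Iic ((s, t) : ℝ × ℝ))).toReal)
    (φ : ℝ × ℝ → ℝ) (hc : Continuous φ) (hb : ∃ C : ℝ, ∀ p, |φ p| ≤ C)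
    (hm₁ : ∀ y : ℝ, Monotone fun x : ℝ => φ (x, y))
    (hm₂ : ∀ x : ℝ, Monotone fun y : ℝ => φ (x, y))
    (hsub : ∀ a b : ℝ × ℝ, φ (a ⊔ b) + φ (a ⊓ b) ≤ φ a + φ b) :
    ∫ p, φ p ∂μ ≥ ∫ p, φ p ∂ν := by
  obtain ⟨C, hC⟩ := hb
  have hKc : IsCompact (Icc ((0, 0) : ℝ × ℝ) (1, 1)) := isCompact_Icc
  have hum : UniformContinuousOn φ (Icc ((0, 0) : ℝ × ℝ) (1, 1)) :=
    hKc.uniformContinuousOn_of_continuous hc.continuousOn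
  have hφμ : Integrable φ μ := (integrable_const C).mono' hc.aestronglyMeasurable
    (Filter.Eventually.of_forall fun p => by simpa using hC p)
  have hφν : Integrable φ ν := (integrable_const C).mono' hc.aestronglyMeasurable
    (Filter.Eventually.of_forall fun p => by simpa using hC p)
  have haeμ : ∀ᵐ p ∂μ, p ∈ Icc ((0, 0) : ℝ × ℝ) (1, 1) := ae_iff.mpr hsμ
  have haeν : ∀ᵐ p ∂ν, p ∈ Icc ((0, 0) : ℝ × ℝ) (1, 1) := ae_iff.mpr hsν
  rw [ge_iff_le]
  refine le_of_forall_pos_le_add fun ε hε => ?_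
  obtain ⟨δ, hδ0, hδ⟩ := Metric.uniformContinuousOn_iff.1 hum (ε/2) (by linarith)
  obtain ⟨m, hm⟩ := exists_nat_one_div_lt hδ0
  set n := m + 1 with hndef
  have hn : 1 ≤ n := Nat.le_add_left 1 m
  have hnpos : (0 : ℝ) < n := by exact_mod_cast hn
  have hinv : (1:ℝ)/n < δ := by
    rw [hndef]
    push_cast
    exact hm
  have happ : ∀ p ∈ Icc ((0, 0) : ℝ × ℝ) (1, 1), |fodsE φ n p - φ p| ≤ ε/2 := by
    intro p hp
    obtain ⟨⟨hx0, hy0⟩, ⟨hx1, hy1⟩⟩ := hp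
    have hx0' : (0:ℝ) ≤ p.1 := hx0
    have hy0' : (0:ℝ) ≤ p.2 := hy0
    have hx1' : p.1 ≤ 1 := hx1
    have hy1' : p.2 ≤ 1 := hy1
    rw [fodsE_eq φ hn ⟨⟨hx0, hy0⟩, ⟨hx1, hy1⟩⟩]
    set q : ℝ × ℝ := ((⌈p.1 * n⌉₊ : ℝ)/n, (⌈p.2 * n⌉₊ : ℝ)/n) with hqdef
    have hc1 : (⌈p.1 * n⌉₊ : ℝ) ≤ n := by
      exact_mod_cast Nat.ceil_le.2 (by nlinarith)
    have hc2 : (⌈p.2 * n⌉₊ : ℝ) ≤ n := by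
      exact_mod_cast Nat.ceil_le.2 (by nlinarith)
    have hqK : q ∈ Icc ((0, 0) : ℝ × ℝ) (1, 1) := by
      refine ⟨⟨?_, ?_⟩, ⟨?_, ?_⟩⟩
      · exact div_nonneg (Nat.cast_nonneg _) hnpos.le
      · exact div_nonneg (Nat.cast_nonneg _) hnpos.le
      · exact (div_le_one hnpos).2 hc1
      · exact (div_le_one hnpos).2 hc2
    have hd1 : |q.1 - p.1| ≤ 1/n := by
      have hl : p.1 ≤ q.1 := by
        rw [hqdef]
        exact (le_div_iff₀ hnpos).2 (Nat.le_ceil _)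
      have hr : q.1 ≤ p.1 + 1/n := by
        rw [hqdef]
        rw [div_le_iff₀ hnpos]
        have := (Nat.ceil_lt_add_one (by positivity : (0:ℝ) ≤ p.1 * n)).le
        calc (⌈p.1 * n⌉₊ : ℝ) ≤ p.1 * n + 1 := this
          _ = (p.1 + 1/n) * n := by field_simp
      rw [abs_le]
      constructor <;> [linarith; linarith]
    have hd2 : |q.2 - p.2| ≤ 1/n := by
      have hl : p.2 ≤ q.2 := by
        rw [hqdef]
        exact (le_div_iff₀ hnpos).2 (Nat.le_ceil _)
      have hr : q.2 ≤ p.2 + 1/n := by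
        rw [hqdef]
        rw [div_le_iff₀ hnpos]
        have := (Nat.ceil_lt_add_one (by positivity : (0:ℝ) ≤ p.2 * n)).le
        calc (⌈p.2 * n⌉₊ : ℝ) ≤ p.2 * n + 1 := this
          _ = (p.2 + 1/n) * n := by field_simp
      rw [abs_le]
      constructor <;> [linarith; linarith]
    have hdq : dist q p < δ := by
      rw [Prod.dist_eq]
      apply max_lt
      · rw [Real.dist_eq]; exact lt_of_le_of_lt hd1 hinv
      · rw [Real.dist_eq]; exact lt_of_le_of_lt hd2 hinv
    have := hδ q hqK p ⟨⟨hx0, hy0⟩, ⟨hx1, hy1⟩⟩ hdq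
    rw [Real.dist_eq] at this
    exact this.le
  have hEμ : Integrable (fodsE φ n) μ := fodsE_integrable φ n μ
  have hEν : Integrable (fodsE φ n) ν := fodsE_integrable φ n ν
  have b1 : ∫ p, φ p ∂ν - ∫ p, fodsE φ n p ∂ν ≤ ε/2 := by
    rw [← integral_sub hφν hEν]
    calc ∫ p, (φ p - fodsE φ n p) ∂ν ≤ ∫ _p, (ε/2) ∂ν := by
          refine integral_mono_ae (hφν.sub hEν) (integrable_const _) ?_
          exact haeν.mono fun p hp => by
            have h := happ p hp
            have h' := abs_le.1 h
            linarith [h'.1]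
      _ = ε/2 := by simp
  have b3 : ∫ p, fodsE φ n p ∂μ - ∫ p, φ p ∂μ ≤ ε/2 := by
    rw [← integral_sub hEμ hφμ]
    calc ∫ p, (fodsE φ n p - φ p) ∂μ ≤ ∫ _p, (ε/2) ∂μ := by
          refine integral_mono_ae (hEμ.sub hφμ) (integrable_const _) ?_
          exact haeμ.mono fun p hp => by
            have h' := abs_le.1 (happ p hp)
            linarith [h'.2]
      _ = ε/2 := by simp
  have b2 : ∫ p, fodsE φ n p ∂ν ≤ ∫ p, fodsE φ n p ∂μ :=
    fodsE_mono μ ν hle φ hm₁ hm₂ hsub hn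
  linarith
end

section
/- Let X = (X₁,Y₁) and W = (X₂,Y₂) be random vectors supported in [0,1]² with joint CDFs F₁, F₂ and marginal CDFs F₁^X, F₁^Y, F₂^X, F₂^Y. Define Kₖ(s,t) = Fₖ^X(s) + Fₖ^Y(t) - Fₖ(s,t). If F₁^X ≤ F₂^X pointwise, F₁^Y ≤ F₂^Y pointwise, and K₁(s,t) ≤ K₂(s,t) for all (s,t), then E[φ(X)] ≥ E[φ(W)] for every bounded continuous φ increasing in each coordinate and supermodular (φ(a∨b) + φ(a∧b) ≥ φ(a) + φ(b)). -/
open Set MeasureTheory Filter Topology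

noncomputable def gfun (n : ℕ) (x : ℝ) : ℝ := min 1 ((⌈(n : ℝ) * x⌉₊ : ℝ) / n)

def Sx (n i : ℕ) : Set (ℝ × ℝ) := {p | (i : ℝ) / n < p.1}
def Sy (n j : ℕ) : Set (ℝ × ℝ) := {p | (j : ℝ) / n < p.2}

lemma measurableSet_Sx (n i : ℕ) : MeasurableSet (Sx n i) :=
  measurable_fst measurableSet_Ioi

lemma measurableSet_Sy (n j : ℕ) : MeasurableSet (Sy n j) :=
  measurable_snd measurableSet_Ioi

lemma sum_range_ite {k n : ℕ} (hk : k ≤ n) (a : ℕ → ℝ) :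
    ∑ i ∈ Finset.range n, (if i < k then a i else 0) = ∑ i ∈ Finset.range k, a i := by
  rw [← Finset.sum_filter]
  congr 1
  ext i
  simp only [Finset.mem_filter, Finset.mem_range]
  omega

lemma gfun_eq {n : ℕ} (hn : 0 < n) (x : ℝ) :
    gfun n x = ((min ⌈(n:ℝ)*x⌉₊ n : ℕ) : ℝ) / n := by
  have hn' : (0:ℝ) < n := by exact_mod_cast hn
  unfold gfun
  rcases le_total (⌈(n:ℝ)*x⌉₊) n with h | h
  · rw [min_eq_left h, min_eq_right ((div_le_one hn').2 (by exact_mod_cast h))]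
  · rw [min_eq_right h, min_eq_left ((one_le_div hn').2 (by exact_mod_cast h))]
    exact (div_self hn'.ne').symm

noncomputable def psi (φ : ℝ × ℝ → ℝ) (n : ℕ) (p : ℝ × ℝ) : ℝ :=
  φ (0, 0)
    + ∑ i ∈ Finset.range n,
        Set.indicator (Sx n i) (fun _ => φ (((i:ℝ)+1)/n, 0) - φ ((i:ℝ)/n, 0)) p
    + ∑ j ∈ Finset.range n,
        Set.indicator (Sy n j) (fun _ => φ (0, ((j:ℝ)+1)/n) - φ (0, (j:ℝ)/n)) p
    + ∑ i ∈ Finset.range n, ∑ j ∈ Finset.range n,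
        Set.indicator (Sx n i ∩ Sy n j)
          (fun _ => φ (((i:ℝ)+1)/n, ((j:ℝ)+1)/n) - φ ((i:ℝ)/n, ((j:ℝ)+1)/n)
            - (φ (((i:ℝ)+1)/n, (j:ℝ)/n) - φ ((i:ℝ)/n, (j:ℝ)/n))) p

lemma psi_eq (φ : ℝ × ℝ → ℝ) (n : ℕ) (p : ℝ × ℝ) :
    psi φ n p = φ (gfun n p.1, gfun n p.2) := by
  rcases Nat.eq_zero_or_pos n with rfl | hn
  · simp [psi, gfun]
  have hn' : (0:ℝ) < n := by exact_mod_cast hn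
  set k := min (⌈(n:ℝ) * p.1⌉₊) n with hk
  set l := min (⌈(n:ℝ) * p.2⌉₊) n with hl
  have hkn : k ≤ n := min_le_right _ _
  have hln : l ≤ n := min_le_right _ _
  have hx : ∀ i, i < n → ((i:ℝ)/n < p.1 ↔ i < k) := by
    intro i hi
    rw [div_lt_iff₀ hn', hk, lt_min_iff]
    constructor
    · intro h; exact ⟨Nat.lt_ceil.2 (by rw [mul_comm]; exact h), hi⟩
    · rintro ⟨h, -⟩; have := Nat.lt_ceil.1 h; linarith [mul_comm (n:ℝ) p.1]
  have hy : ∀ j, j < n → ((j:ℝ)/n < p.2 ↔ j < l) := by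
    intro j hj
    rw [div_lt_iff₀ hn', hl, lt_min_iff]
    constructor
    · intro h; exact ⟨Nat.lt_ceil.2 (by rw [mul_comm]; exact h), hj⟩
    · rintro ⟨h, -⟩; have := Nat.lt_ceil.1 h; linarith [mul_comm (n:ℝ) p.2]
  have hg1 : gfun n p.1 = (k:ℝ)/n := gfun_eq hn p.1
  have hg2 : gfun n p.2 = (l:ℝ)/n := gfun_eq hn p.2
  have e1 : ∑ i ∈ Finset.range n,
      Set.indicator (Sx n i) (fun _ => φ (((i:ℝ)+1)/n, 0) - φ ((i:ℝ)/n, 0)) p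
      = φ ((k:ℝ)/n, 0) - φ (0, 0) := by
    have step : ∀ i ∈ Finset.range n,
        Set.indicator (Sx n i) (fun _ => φ (((i:ℝ)+1)/n, 0) - φ ((i:ℝ)/n, 0)) p
          = if i < k then φ (((i:ℝ)+1)/n, 0) - φ ((i:ℝ)/n, 0) else 0 := by
      intro i hi
      by_cases h : i < k
      · rw [Set.indicator_of_mem (show p ∈ Sx n i from (hx i (Finset.mem_range.1 hi)).2 h), if_pos h]
      · rw [Set.indicator_of_notMem (show p ∉ Sx n i from fun hm => h ((hx i (Finset.mem_range.1 hi)).1 hm)), if_neg h]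
    rw [Finset.sum_congr rfl step, sum_range_ite hkn]
    have h1 := Finset.sum_range_sub (fun i : ℕ => φ ((i:ℝ)/n, 0)) k
    simp only [Nat.cast_add, Nat.cast_one, Nat.cast_zero, zero_div] at h1
    exact h1
  have e2 : ∑ j ∈ Finset.range n,
      Set.indicator (Sy n j) (fun _ => φ (0, ((j:ℝ)+1)/n) - φ (0, (j:ℝ)/n)) p
      = φ (0, (l:ℝ)/n) - φ (0, 0) := by
    have step : ∀ j ∈ Finset.range n,
        Set.indicator (Sy n j) (fun _ => φ (0, ((j:ℝ)+1)/n) - φ (0, (j:ℝ)/n)) p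
          = if j < l then φ (0, ((j:ℝ)+1)/n) - φ (0, (j:ℝ)/n) else 0 := by
      intro j hj
      by_cases h : j < l
      · rw [Set.indicator_of_mem (show p ∈ Sy n j from (hy j (Finset.mem_range.1 hj)).2 h), if_pos h]
      · rw [Set.indicator_of_notMem (show p ∉ Sy n j from fun hm => h ((hy j (Finset.mem_range.1 hj)).1 hm)), if_neg h]
    rw [Finset.sum_congr rfl step, sum_range_ite hln]
    have h1 := Finset.sum_range_sub (fun j : ℕ => φ (0, (j:ℝ)/n)) l
    simp only [Nat.cast_add, Nat.cast_one, Nat.cast_zero, zero_div] at h1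
    exact h1
  have e3 : ∑ i ∈ Finset.range n, ∑ j ∈ Finset.range n,
      Set.indicator (Sx n i ∩ Sy n j)
        (fun _ => φ (((i:ℝ)+1)/n, ((j:ℝ)+1)/n) - φ ((i:ℝ)/n, ((j:ℝ)+1)/n)
          - (φ (((i:ℝ)+1)/n, (j:ℝ)/n) - φ ((i:ℝ)/n, (j:ℝ)/n))) p
      = φ ((k:ℝ)/n, (l:ℝ)/n) - φ (0, (l:ℝ)/n) - (φ ((k:ℝ)/n, 0) - φ (0, 0)) := by
    have step : ∀ i ∈ Finset.range n, ∀ j ∈ Finset.range n,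
        Set.indicator (Sx n i ∩ Sy n j)
          (fun _ => φ (((i:ℝ)+1)/n, ((j:ℝ)+1)/n) - φ ((i:ℝ)/n, ((j:ℝ)+1)/n)
            - (φ (((i:ℝ)+1)/n, (j:ℝ)/n) - φ ((i:ℝ)/n, (j:ℝ)/n))) p
          = if i < k then (if j < l then φ (((i:ℝ)+1)/n, ((j:ℝ)+1)/n) - φ ((i:ℝ)/n, ((j:ℝ)+1)/n)
            - (φ (((i:ℝ)+1)/n, (j:ℝ)/n) - φ ((i:ℝ)/n, (j:ℝ)/n)) else 0) else 0 := by
      intro i hi j hj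
      by_cases h : i < k
      · by_cases h' : j < l
        · rw [Set.indicator_of_mem (show p ∈ Sx n i ∩ Sy n j from
            ⟨(hx i (Finset.mem_range.1 hi)).2 h, (hy j (Finset.mem_range.1 hj)).2 h'⟩), if_pos h, if_pos h']
        · rw [Set.indicator_of_notMem (show p ∉ Sx n i ∩ Sy n j from
            fun hm => h' ((hy j (Finset.mem_range.1 hj)).1 hm.2)), if_pos h, if_neg h']
      · rw [Set.indicator_of_notMem (show p ∉ Sx n i ∩ Sy n j from
          fun hm => h ((hx i (Finset.mem_range.1 hi)).1 hm.1)), if_neg h]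
    rw [Finset.sum_congr rfl (fun i hi => Finset.sum_congr rfl (fun j hj => step i hi j hj))]
    have inner : ∀ i : ℕ, ∑ j ∈ Finset.range n,
        (if i < k then (if j < l then φ (((i:ℝ)+1)/n, ((j:ℝ)+1)/n) - φ ((i:ℝ)/n, ((j:ℝ)+1)/n)
          - (φ (((i:ℝ)+1)/n, (j:ℝ)/n) - φ ((i:ℝ)/n, (j:ℝ)/n)) else 0) else 0)
        = if i < k then (φ (((i:ℝ)+1)/n, (l:ℝ)/n) - φ ((i:ℝ)/n, (l:ℝ)/n)
          - (φ (((i:ℝ)+1)/n, 0) - φ ((i:ℝ)/n, 0))) else 0 := by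
      intro i
      by_cases h : i < k
      · simp only [if_pos h]
        rw [sum_range_ite hln]
        have h1 := Finset.sum_range_sub (fun j : ℕ =>
          φ (((i:ℝ)+1)/n, (j:ℝ)/n) - φ ((i:ℝ)/n, (j:ℝ)/n)) l
        simp only [Nat.cast_add, Nat.cast_one, Nat.cast_zero, zero_div] at h1
        rw [h1]
      · simp only [if_neg h, Finset.sum_const_zero]
    rw [Finset.sum_congr rfl (fun i _ => inner i), sum_range_ite hkn]
    have h1 := Finset.sum_range_sub (fun i : ℕ =>
      φ ((i:ℝ)/n, (l:ℝ)/n) - φ ((i:ℝ)/n, 0)) k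
    simp only [Nat.cast_add, Nat.cast_one, Nat.cast_zero, zero_div] at h1
    have h2 : ∀ i : ℕ, φ (((i:ℝ)+1)/n, (l:ℝ)/n) - φ ((i:ℝ)/n, (l:ℝ)/n)
          - (φ (((i:ℝ)+1)/n, 0) - φ ((i:ℝ)/n, 0))
        = φ (((i:ℝ)+1)/n, (l:ℝ)/n) - φ (((i:ℝ)+1)/n, 0)
          - (φ ((i:ℝ)/n, (l:ℝ)/n) - φ ((i:ℝ)/n, 0)) := fun i => by ring
    rw [Finset.sum_congr rfl (fun i _ => h2 i), h1]
    ring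
  rw [psi, e1, e2, e3, hg1, hg2]
  ring

lemma measurable_psi (φ : ℝ × ℝ → ℝ) (n : ℕ) : Measurable (psi φ n) := by
  unfold psi
  refine ((measurable_const.add ?_).add ?_).add ?_
  · exact Finset.measurable_sum _ fun i _ =>
      measurable_const.indicator (measurableSet_Sx n i)
  · exact Finset.measurable_sum _ fun j _ =>
      measurable_const.indicator (measurableSet_Sy n j)
  · exact Finset.measurable_sum _ fun i _ => Finset.measurable_sum _ fun j _ =>
      measurable_const.indicator ((measurableSet_Sx n i).inter (measurableSet_Sy n j))

lemma integral_psi (μ : Measure (ℝ × ℝ)) [IsProbabilityMeasure μ] (φ : ℝ × ℝ → ℝ) (n : ℕ) :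
    ∫ p, psi φ n p ∂μ
      = φ (0, 0)
        + ∑ i ∈ Finset.range n, (μ (Sx n i)).toReal * (φ (((i:ℝ)+1)/n, 0) - φ ((i:ℝ)/n, 0))
        + ∑ j ∈ Finset.range n, (μ (Sy n j)).toReal * (φ (0, ((j:ℝ)+1)/n) - φ (0, (j:ℝ)/n))
        + ∑ i ∈ Finset.range n, ∑ j ∈ Finset.range n,
            (μ (Sx n i ∩ Sy n j)).toReal *
              (φ (((i:ℝ)+1)/n, ((j:ℝ)+1)/n) - φ ((i:ℝ)/n, ((j:ℝ)+1)/n)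
                - (φ (((i:ℝ)+1)/n, (j:ℝ)/n) - φ ((i:ℝ)/n, (j:ℝ)/n))) := by
  have hSx : ∀ i : ℕ, Integrable (fun p => Set.indicator (Sx n i)
      (fun _ => φ (((i:ℝ)+1)/n, 0) - φ ((i:ℝ)/n, 0)) p) μ :=
    fun i => (integrable_const _).indicator (measurableSet_Sx n i)
  have hSy : ∀ j : ℕ, Integrable (fun p => Set.indicator (Sy n j)
      (fun _ => φ (0, ((j:ℝ)+1)/n) - φ (0, (j:ℝ)/n)) p) μ :=
    fun j => (integrable_const _).indicator (measurableSet_Sy n j)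
  have hSxy : ∀ i j : ℕ, Integrable (fun p => Set.indicator (Sx n i ∩ Sy n j)
      (fun _ => φ (((i:ℝ)+1)/n, ((j:ℝ)+1)/n) - φ ((i:ℝ)/n, ((j:ℝ)+1)/n)
        - (φ (((i:ℝ)+1)/n, (j:ℝ)/n) - φ ((i:ℝ)/n, (j:ℝ)/n))) p) μ :=
    fun i j => (integrable_const _).indicator
      ((measurableSet_Sx n i).inter (measurableSet_Sy n j))
  have h1 : Integrable (fun p => ∑ i ∈ Finset.range n, Set.indicator (Sx n i)
      (fun _ => φ (((i:ℝ)+1)/n, 0) - φ ((i:ℝ)/n, 0)) p) μ :=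
    integrable_finset_sum _ fun i _ => hSx i
  have h2 : Integrable (fun p => ∑ j ∈ Finset.range n, Set.indicator (Sy n j)
      (fun _ => φ (0, ((j:ℝ)+1)/n) - φ (0, (j:ℝ)/n)) p) μ :=
    integrable_finset_sum _ fun j _ => hSy j
  have h3 : Integrable (fun p => ∑ i ∈ Finset.range n, ∑ j ∈ Finset.range n,
      Set.indicator (Sx n i ∩ Sy n j)
        (fun _ => φ (((i:ℝ)+1)/n, ((j:ℝ)+1)/n) - φ ((i:ℝ)/n, ((j:ℝ)+1)/n)
          - (φ (((i:ℝ)+1)/n, (j:ℝ)/n) - φ ((i:ℝ)/n, (j:ℝ)/n))) p) μ :=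
    integrable_finset_sum _ fun i _ => integrable_finset_sum _ fun j _ => hSxy i j
  have I1 : ∫ p, (∑ i ∈ Finset.range n, Set.indicator (Sx n i)
      (fun _ => φ (((i:ℝ)+1)/n, 0) - φ ((i:ℝ)/n, 0)) p) ∂μ
      = ∑ i ∈ Finset.range n, (μ (Sx n i)).toReal * (φ (((i:ℝ)+1)/n, 0) - φ ((i:ℝ)/n, 0)) := by
    rw [integral_finset_sum _ fun i _ => hSx i]
    exact Finset.sum_congr rfl fun i _ => by
      rw [integral_indicator_const _ (measurableSet_Sx n i), smul_eq_mul, measureReal_def]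
  have I2 : ∫ p, (∑ j ∈ Finset.range n, Set.indicator (Sy n j)
      (fun _ => φ (0, ((j:ℝ)+1)/n) - φ (0, (j:ℝ)/n)) p) ∂μ
      = ∑ j ∈ Finset.range n, (μ (Sy n j)).toReal * (φ (0, ((j:ℝ)+1)/n) - φ (0, (j:ℝ)/n)) := by
    rw [integral_finset_sum _ fun j _ => hSy j]
    exact Finset.sum_congr rfl fun j _ => by
      rw [integral_indicator_const _ (measurableSet_Sy n j), smul_eq_mul, measureReal_def]
  have I3 : ∫ p, (∑ i ∈ Finset.range n, ∑ j ∈ Finset.range n,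
      Set.indicator (Sx n i ∩ Sy n j)
        (fun _ => φ (((i:ℝ)+1)/n, ((j:ℝ)+1)/n) - φ ((i:ℝ)/n, ((j:ℝ)+1)/n)
          - (φ (((i:ℝ)+1)/n, (j:ℝ)/n) - φ ((i:ℝ)/n, (j:ℝ)/n))) p) ∂μ
      = ∑ i ∈ Finset.range n, ∑ j ∈ Finset.range n,
          (μ (Sx n i ∩ Sy n j)).toReal *
            (φ (((i:ℝ)+1)/n, ((j:ℝ)+1)/n) - φ ((i:ℝ)/n, ((j:ℝ)+1)/n)
              - (φ (((i:ℝ)+1)/n, (j:ℝ)/n) - φ ((i:ℝ)/n, (j:ℝ)/n))) := by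
    rw [integral_finset_sum _ fun i _ => integrable_finset_sum _ fun j _ => hSxy i j]
    refine Finset.sum_congr rfl fun i _ => ?_
    rw [integral_finset_sum _ fun j _ => hSxy i j]
    exact Finset.sum_congr rfl fun j _ => by
      rw [integral_indicator_const _ ((measurableSet_Sx n i).inter (measurableSet_Sy n j)),
        smul_eq_mul, measureReal_def]
  simp only [psi]
  have A : ∫ p, (φ (0, 0)
        + (∑ i ∈ Finset.range n, Set.indicator (Sx n i)
            (fun _ => φ (((i:ℝ)+1)/n, 0) - φ ((i:ℝ)/n, 0)) p)
        + (∑ j ∈ Finset.range n, Set.indicator (Sy n j)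
            (fun _ => φ (0, ((j:ℝ)+1)/n) - φ (0, (j:ℝ)/n)) p)
        + (∑ i ∈ Finset.range n, ∑ j ∈ Finset.range n,
            Set.indicator (Sx n i ∩ Sy n j)
              (fun _ => φ (((i:ℝ)+1)/n, ((j:ℝ)+1)/n) - φ ((i:ℝ)/n, ((j:ℝ)+1)/n)
                - (φ (((i:ℝ)+1)/n, (j:ℝ)/n) - φ ((i:ℝ)/n, (j:ℝ)/n))) p)) ∂μ
      = ∫ p, (φ (0, 0)
        + (∑ i ∈ Finset.range n, Set.indicator (Sx n i)
            (fun _ => φ (((i:ℝ)+1)/n, 0) - φ ((i:ℝ)/n, 0)) p)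
        + (∑ j ∈ Finset.range n, Set.indicator (Sy n j)
            (fun _ => φ (0, ((j:ℝ)+1)/n) - φ (0, (j:ℝ)/n)) p)) ∂μ
        + ∫ p, (∑ i ∈ Finset.range n, ∑ j ∈ Finset.range n,
            Set.indicator (Sx n i ∩ Sy n j)
              (fun _ => φ (((i:ℝ)+1)/n, ((j:ℝ)+1)/n) - φ ((i:ℝ)/n, ((j:ℝ)+1)/n)
                - (φ (((i:ℝ)+1)/n, (j:ℝ)/n) - φ ((i:ℝ)/n, (j:ℝ)/n))) p) ∂μ :=
    integral_add (((integrable_const _).add h1).add h2) h3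
  have B : ∫ p, (φ (0, 0)
        + (∑ i ∈ Finset.range n, Set.indicator (Sx n i)
            (fun _ => φ (((i:ℝ)+1)/n, 0) - φ ((i:ℝ)/n, 0)) p)
        + (∑ j ∈ Finset.range n, Set.indicator (Sy n j)
            (fun _ => φ (0, ((j:ℝ)+1)/n) - φ (0, (j:ℝ)/n)) p)) ∂μ
      = ∫ p, (φ (0, 0)
        + (∑ i ∈ Finset.range n, Set.indicator (Sx n i)
            (fun _ => φ (((i:ℝ)+1)/n, 0) - φ ((i:ℝ)/n, 0)) p)) ∂μ
        + ∫ p, (∑ j ∈ Finset.range n, Set.indicator (Sy n j)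
            (fun _ => φ (0, ((j:ℝ)+1)/n) - φ (0, (j:ℝ)/n)) p) ∂μ :=
    integral_add ((integrable_const _).add h1) h2
  have Cq : ∫ p, (φ (0, 0)
        + (∑ i ∈ Finset.range n, Set.indicator (Sx n i)
            (fun _ => φ (((i:ℝ)+1)/n, 0) - φ ((i:ℝ)/n, 0)) p)) ∂μ
      = ∫ _p, (φ (0, 0) : ℝ) ∂μ
        + ∫ p, (∑ i ∈ Finset.range n, Set.indicator (Sx n i)
            (fun _ => φ (((i:ℝ)+1)/n, 0) - φ ((i:ℝ)/n, 0)) p) ∂μ :=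
    integral_add (integrable_const _) h1
  rw [A, B, Cq, I1, I2, I3, integral_const]
  simp

lemma gfun_tendsto {x : ℝ} (h0 : 0 ≤ x) (h1 : x ≤ 1) :
    Filter.Tendsto (fun n => gfun n x) Filter.atTop (nhds x) := by
  have hupper : Filter.Tendsto (fun n : ℕ => x + 1 / (n:ℝ)) Filter.atTop (nhds x) := by
    simpa using (tendsto_const_nhds : Tendsto (fun _ : ℕ => x) atTop (nhds x)).add (tendsto_one_div_atTop_nhds_zero_nat : Tendsto (fun n : ℕ => 1 / (n:ℝ)) atTop (nhds 0))
  refine tendsto_of_tendsto_of_tendsto_of_le_of_le' tendsto_const_nhds hupper ?_ ?_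
  · filter_upwards [Filter.eventually_ge_atTop 1] with n hn
    have hn' : (0:ℝ) < n := by exact_mod_cast hn
    refine le_min h1 ?_
    rw [le_div_iff₀ hn']
    calc x * n = (n:ℝ) * x := by ring
      _ ≤ ⌈(n:ℝ) * x⌉₊ := Nat.le_ceil _
  · filter_upwards [Filter.eventually_ge_atTop 1] with n hn
    have hn' : (0:ℝ) < n := by exact_mod_cast hn
    refine min_le_of_right_le ?_
    have hce : ((⌈(n:ℝ)*x⌉₊ : ℝ)) ≤ (n:ℝ)*x + 1 :=
      (Nat.ceil_lt_add_one (by positivity)).le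
    calc ((⌈(n:ℝ)*x⌉₊ : ℝ))/n ≤ ((n:ℝ)*x + 1)/n := by
          exact div_le_div_of_nonneg_right hce hn'.le
      _ = x + 1/n := by field_simp

theorem first_order_dominance_supermodular_general
    (μ ν : Measure (ℝ × ℝ)) [IsProbabilityMeasure μ] [IsProbabilityMeasure ν]
    (hsμ : μ (Icc ((0, 0) : ℝ × ℝ) (1, 1))ᶜ = 0)
    (hsν : ν (Icc ((0, 0) : ℝ × ℝ) (1, 1))ᶜ = 0)
    (hX : ∀ s : ℝ, (μ {p : ℝ × ℝ | p.1 ≤ s}).toReal ≤ (ν {p : ℝ × ℝ | p.1 ≤ s}).toReal)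
    (hY : ∀ t : ℝ, (μ {p : ℝ × ℝ | p.2 ≤ t}).toReal ≤ (ν {p : ℝ × ℝ | p.2 ≤ t}).toReal)
    (hK : ∀ s t : ℝ,
      (μ {p : ℝ × ℝ | p.1 ≤ s}).toReal + (μ {p : ℝ × ℝ | p.2 ≤ t}).toReal
          - (μ (Iic ((s, t) : ℝ × ℝ))).toReal
        ≤ (ν {p : ℝ × ℝ | p.1 ≤ s}).toReal + (ν {p : ℝ × ℝ | p.2 ≤ t}).toReal
          - (ν (Iic ((s, t) : ℝ × ℝ))).toReal)
    (φ : ℝ × ℝ → ℝ) (hc : Continuous φ) (hb : ∃ C : ℝ, ∀ p, |φ p| ≤ C)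
    (hm₁ : ∀ y : ℝ, Monotone fun x : ℝ => φ (x, y))
    (hm₂ : ∀ x : ℝ, Monotone fun y : ℝ => φ (x, y))
    (hsuper : ∀ a b : ℝ × ℝ, φ (a ⊔ b) + φ (a ⊓ b) ≥ φ a + φ b) :
    ∫ p, φ p ∂μ ≥ ∫ p, φ p ∂ν := by
  -- measure comparison lemmas
  have hA : ∀ s : ℝ, MeasurableSet {p : ℝ × ℝ | p.1 ≤ s} :=
    fun s => measurable_fst measurableSet_Iic
  have hB : ∀ t : ℝ, MeasurableSet {p : ℝ × ℝ | p.2 ≤ t} :=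
    fun t => measurable_snd measurableSet_Iic
  have L1 : ∀ s : ℝ, (ν {p : ℝ × ℝ | s < p.1}).toReal ≤ (μ {p : ℝ × ℝ | s < p.1}).toReal := by
    intro s
    have h1 : {p : ℝ × ℝ | s < p.1} = {p : ℝ × ℝ | p.1 ≤ s}ᶜ := by
      ext p; simp [not_le]
    rw [h1, prob_compl_eq_one_sub (hA s), prob_compl_eq_one_sub (hA s),
      ENNReal.toReal_sub_of_le prob_le_one ENNReal.one_ne_top,
      ENNReal.toReal_sub_of_le prob_le_one ENNReal.one_ne_top, ENNReal.toReal_one]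
    linarith [hX s]
  have L2 : ∀ t : ℝ, (ν {p : ℝ × ℝ | t < p.2}).toReal ≤ (μ {p : ℝ × ℝ | t < p.2}).toReal := by
    intro t
    have h1 : {p : ℝ × ℝ | t < p.2} = {p : ℝ × ℝ | p.2 ≤ t}ᶜ := by
      ext p; simp [not_le]
    rw [h1, prob_compl_eq_one_sub (hB t), prob_compl_eq_one_sub (hB t),
      ENNReal.toReal_sub_of_le prob_le_one ENNReal.one_ne_top,
      ENNReal.toReal_sub_of_le prob_le_one ENNReal.one_ne_top, ENNReal.toReal_one]
    linarith [hY t]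
  have L3 : ∀ s t : ℝ, (ν ({p : ℝ × ℝ | s < p.1} ∩ {p : ℝ × ℝ | t < p.2})).toReal
      ≤ (μ ({p : ℝ × ℝ | s < p.1} ∩ {p : ℝ × ℝ | t < p.2})).toReal := by
    intro s t
    have h1 : {p : ℝ × ℝ | s < p.1} ∩ {p : ℝ × ℝ | t < p.2}
        = ({p : ℝ × ℝ | p.1 ≤ s} ∪ {p : ℝ × ℝ | p.2 ≤ t})ᶜ := by
      ext p; simp [not_le, not_or]
    have hIic : {p : ℝ × ℝ | p.1 ≤ s} ∩ {p : ℝ × ℝ | p.2 ≤ t} = Iic ((s, t) : ℝ × ℝ) := by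
      ext p; simp [Prod.le_def]
    have eq1 : ∀ (κ : Measure (ℝ × ℝ)) [IsProbabilityMeasure κ],
        (κ ({p : ℝ × ℝ | p.1 ≤ s} ∪ {p : ℝ × ℝ | p.2 ≤ t})).toReal
          + (κ (Iic ((s, t) : ℝ × ℝ))).toReal
        = (κ {p : ℝ × ℝ | p.1 ≤ s}).toReal + (κ {p : ℝ × ℝ | p.2 ≤ t}).toReal := by
      intro κ _
      rw [← ENNReal.toReal_add (measure_ne_top _ _) (measure_ne_top _ _),
        ← ENNReal.toReal_add (measure_ne_top _ _) (measure_ne_top _ _),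
        ← hIic, measure_union_add_inter _ (hB t)]
    rw [h1, prob_compl_eq_one_sub ((hA s).union (hB t)),
      prob_compl_eq_one_sub ((hA s).union (hB t)),
      ENNReal.toReal_sub_of_le prob_le_one ENNReal.one_ne_top,
      ENNReal.toReal_sub_of_le prob_le_one ENNReal.one_ne_top, ENNReal.toReal_one]
    have e1 := eq1 μ
    have e2 := eq1 ν
    have h3 := hK s t
    linarith
  -- per-n comparison
  have key : ∀ n : ℕ, ∫ p, psi φ n p ∂ν ≤ ∫ p, psi φ n p ∂μ := by
    intro n
    rw [integral_psi μ φ n, integral_psi ν φ n]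
    have T1 : ∑ i ∈ Finset.range n, (ν (Sx n i)).toReal * (φ (((i:ℝ)+1)/n, 0) - φ ((i:ℝ)/n, 0))
        ≤ ∑ i ∈ Finset.range n, (μ (Sx n i)).toReal * (φ (((i:ℝ)+1)/n, 0) - φ ((i:ℝ)/n, 0)) := by
      refine Finset.sum_le_sum fun i hi => ?_
      refine mul_le_mul_of_nonneg_right (L1 _) ?_
      have hn' : (0:ℝ) < n := by
        exact_mod_cast Nat.zero_lt_of_lt (Finset.mem_range.1 hi)
      have : (i:ℝ)/n ≤ ((i:ℝ)+1)/n := by gcongr; linarith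
      simpa using sub_nonneg.2 (hm₁ 0 this)
    have T2 : ∑ j ∈ Finset.range n, (ν (Sy n j)).toReal * (φ (0, ((j:ℝ)+1)/n) - φ (0, (j:ℝ)/n))
        ≤ ∑ j ∈ Finset.range n, (μ (Sy n j)).toReal * (φ (0, ((j:ℝ)+1)/n) - φ (0, (j:ℝ)/n)) := by
      refine Finset.sum_le_sum fun j hj => ?_
      refine mul_le_mul_of_nonneg_right (L2 _) ?_
      have hn' : (0:ℝ) < n := by
        exact_mod_cast Nat.zero_lt_of_lt (Finset.mem_range.1 hj)
      have : (j:ℝ)/n ≤ ((j:ℝ)+1)/n := by gcongr; linarith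
      simpa using sub_nonneg.2 (hm₂ 0 this)
    have T3 : ∑ i ∈ Finset.range n, ∑ j ∈ Finset.range n,
          (ν (Sx n i ∩ Sy n j)).toReal *
            (φ (((i:ℝ)+1)/n, ((j:ℝ)+1)/n) - φ ((i:ℝ)/n, ((j:ℝ)+1)/n)
              - (φ (((i:ℝ)+1)/n, (j:ℝ)/n) - φ ((i:ℝ)/n, (j:ℝ)/n)))
        ≤ ∑ i ∈ Finset.range n, ∑ j ∈ Finset.range n,
          (μ (Sx n i ∩ Sy n j)).toReal *
            (φ (((i:ℝ)+1)/n, ((j:ℝ)+1)/n) - φ ((i:ℝ)/n, ((j:ℝ)+1)/n)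
              - (φ (((i:ℝ)+1)/n, (j:ℝ)/n) - φ ((i:ℝ)/n, (j:ℝ)/n))) := by
      refine Finset.sum_le_sum fun i hi => Finset.sum_le_sum fun j hj => ?_
      refine mul_le_mul_of_nonneg_right (L3 _ _) ?_
      have hn' : (0:ℝ) < n := by
        exact_mod_cast Nat.zero_lt_of_lt (Finset.mem_range.1 hi)
      have hi' : (i:ℝ)/n ≤ ((i:ℝ)+1)/n := by gcongr; linarith
      have hj' : (j:ℝ)/n ≤ ((j:ℝ)+1)/n := by gcongr; linarith
      have hs := hsuper (((i:ℝ)+1)/n, (j:ℝ)/n) ((i:ℝ)/n, ((j:ℝ)+1)/n)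
      rw [Prod.mk_sup_mk, Prod.mk_inf_mk,
        max_eq_left hi', max_eq_right hj', min_eq_right hi', min_eq_left hj'] at hs
      linarith
    linarith
  -- dominated convergence
  obtain ⟨C, hC⟩ := hb
  have hbound : ∀ n : ℕ, ∀ᵐ p ∂(μ : Measure (ℝ × ℝ)), ‖psi φ n p‖ ≤ C := by
    intro n
    refine Filter.Eventually.of_forall fun p => ?_
    rw [psi_eq, Real.norm_eq_abs]
    exact hC _
  have hbound' : ∀ n : ℕ, ∀ᵐ p ∂(ν : Measure (ℝ × ℝ)), ‖psi φ n p‖ ≤ C := by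
    intro n
    refine Filter.Eventually.of_forall fun p => ?_
    rw [psi_eq, Real.norm_eq_abs]
    exact hC _
  have hlim : ∀ (κ : Measure (ℝ × ℝ)), κ (Icc ((0, 0) : ℝ × ℝ) (1, 1))ᶜ = 0 →
      ∀ᵐ p ∂κ, Filter.Tendsto (fun n => psi φ n p) Filter.atTop (nhds (φ p)) := by
    intro κ hκ
    have hae : ∀ᵐ p ∂κ, p ∈ Icc ((0, 0) : ℝ × ℝ) (1, 1) := mem_ae_iff.2 hκ
    filter_upwards [hae] with p hp
    have h1 : 0 ≤ p.1 := hp.1.1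
    have h2 : p.1 ≤ 1 := hp.2.1
    have h3 : 0 ≤ p.2 := hp.1.2
    have h4 : p.2 ≤ 1 := hp.2.2
    have t1 := gfun_tendsto h1 h2
    have t2 := gfun_tendsto h3 h4
    have t3 : Filter.Tendsto (fun n => (gfun n p.1, gfun n p.2)) Filter.atTop
        (nhds (p.1, p.2)) := t1.prodMk_nhds t2
    have t4 := (hc.tendsto (p.1, p.2)).comp t3
    simp only [Function.comp_def] at t4
    have : (fun n => psi φ n p) = fun n => φ (gfun n p.1, gfun n p.2) := by
      funext n; exact psi_eq φ n p
    rw [this]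
    simpa using t4
  have tμ : Filter.Tendsto (fun n => ∫ p, psi φ n p ∂μ) Filter.atTop (nhds (∫ p, φ p ∂μ)) :=
    tendsto_integral_of_dominated_convergence (fun _ => C)
      (fun n => (measurable_psi φ n).aestronglyMeasurable) (integrable_const C)
      hbound (hlim μ hsμ)
  have tν : Filter.Tendsto (fun n => ∫ p, psi φ n p ∂ν) Filter.atTop (nhds (∫ p, φ p ∂ν)) :=
    tendsto_integral_of_dominated_convergence (fun _ => C)
      (fun n => (measurable_psi φ n).aestronglyMeasurable) (integrable_const C)
      hbound' (hlim ν hsν)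
  exact le_of_tendsto_of_tendsto' tν tμ key
end

section
/- Let F₁, F₂ be C¹ CDFs of absolutely continuous probability distributions on [0,1]² with F₁(s,t) ≤ F₂(s,t) everywhere. Then for every C² function φ on [0,1]² with φ_x ≥ 0, φ_y ≥ 0, and φ_{xy} ≤ 0, we have E₁[φ] ≥ E₂[φ]. -/
open Set MeasureTheory

section Calc
variable {f : ℝ × ℝ → ℝ} (hf : ContDiff ℝ 2 f)
include hf

lemma slice1 (s t : ℝ) :
    HasDerivAt (fun s' => f (s', t)) (fderiv ℝ f (s, t) (1, 0)) s := by
  have h := (hf.differentiable two_ne_zero (s, t)).hasFDerivAt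
  have hγ : HasDerivAt (fun s' : ℝ => ((s' : ℝ), t)) ((1 : ℝ), (0 : ℝ)) s :=
    HasDerivAt.prodMk (hasDerivAt_id s) (hasDerivAt_const s t)
  exact h.comp_hasDerivAt s hγ

lemma slice2 (s t : ℝ) :
    HasDerivAt (fun t' => f (s, t')) (fderiv ℝ f (s, t) (0, 1)) t := by
  have h := (hf.differentiable two_ne_zero (s, t)).hasFDerivAt
  have hγ : HasDerivAt (fun t' : ℝ => ((s : ℝ), (t' : ℝ))) ((0 : ℝ), (1 : ℝ)) t :=
    HasDerivAt.prodMk (hasDerivAt_const t s) (hasDerivAt_id t)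
  exact h.comp_hasDerivAt t hγ

lemma fd1 : ContDiff ℝ 1 (fderiv ℝ f) := hf.fderiv_right (by norm_num)

lemma hasFDerivA (v : ℝ × ℝ) (p : ℝ × ℝ) :
    HasFDerivAt (fun q => fderiv ℝ f q v)
      ((ContinuousLinearMap.apply ℝ ℝ v).comp (fderiv ℝ (fderiv ℝ f) p)) p :=
  (ContinuousLinearMap.apply ℝ ℝ v).hasFDerivAt.comp p
    ((fd1 hf).differentiable one_ne_zero p).hasFDerivAt

lemma sliceA (s t : ℝ) :
    HasDerivAt (fun t' => fderiv ℝ f (s, t') (1, 0))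
      (fderiv ℝ (fderiv ℝ f) (s, t) (0, 1) (1, 0)) t := by
  have h := hasFDerivA hf (1, 0) (s, t)
  have hγ : HasDerivAt (fun t' : ℝ => ((s : ℝ), (t' : ℝ))) ((0 : ℝ), (1 : ℝ)) t :=
    HasDerivAt.prodMk (hasDerivAt_const t s) (hasDerivAt_id t)
  exact h.comp_hasDerivAt t hγ

lemma contC (v w : ℝ × ℝ) : Continuous (fun p => fderiv ℝ (fderiv ℝ f) p v w) := by
  have h2 : Continuous (fderiv ℝ (fderiv ℝ f)) :=
    ((fd1 hf).fderiv_right (m := 0) (by norm_num)).continuous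
  exact (h2.clm_apply continuous_const).clm_apply continuous_const

lemma contA (v : ℝ × ℝ) : Continuous (fun p => fderiv ℝ f p v) :=
  ((ContinuousLinearMap.apply ℝ ℝ v).contDiff.comp (fd1 hf)).continuous

lemma pointwise (x y : ℝ) :
    f (x, y) = f (1, 1) - (∫ s in x..(1:ℝ), fderiv ℝ f (s, 1) (1, 0))
      - (∫ t in y..(1:ℝ), fderiv ℝ f (1, t) (0, 1))
      + ∫ s in x..(1:ℝ), (∫ t in y..(1:ℝ), fderiv ℝ (fderiv ℝ f) (s, t) (0, 1) (1, 0)) := by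
  have h1 : (∫ t in y..(1:ℝ), fderiv ℝ f (1, t) (0, 1)) = f (1, 1) - f (1, y) :=
    intervalIntegral.integral_eq_sub_of_hasDerivAt (fun t _ => slice2 hf 1 t)
      (((contA hf (0, 1)).comp (continuous_const.prodMk continuous_id)).intervalIntegrable y 1)
  have hB : ∀ s : ℝ, (∫ t in y..(1:ℝ), fderiv ℝ (fderiv ℝ f) (s, t) (0, 1) (1, 0))
      = fderiv ℝ f (s, 1) (1, 0) - fderiv ℝ f (s, y) (1, 0) := fun s =>
    intervalIntegral.integral_eq_sub_of_hasDerivAt (fun t _ => sliceA hf s t)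
      (((contC hf (0, 1) (1, 0)).comp (continuous_const.prodMk continuous_id)).intervalIntegrable y 1)
  have h2 : (∫ s in x..(1:ℝ), fderiv ℝ f (s, y) (1, 0)) = f (1, y) - f (x, y) :=
    intervalIntegral.integral_eq_sub_of_hasDerivAt (fun s _ => slice1 hf s y)
      (((contA hf (1, 0)).comp (continuous_id.prodMk continuous_const)).intervalIntegrable x 1)
  have hcont2 : Continuous (fun s : ℝ => ∫ t in y..(1:ℝ),
      fderiv ℝ (fderiv ℝ f) (s, t) (0, 1) (1, 0)) := by
    apply intervalIntegral.continuous_parametric_intervalIntegral_of_continuous'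
      (f := fun (s : ℝ) (t : ℝ) => fderiv ℝ (fderiv ℝ f) (s, t) (0, 1) (1, 0))
    exact (contC hf (0, 1) (1, 0)).comp (continuous_fst.prodMk continuous_snd)
  have h3 : (∫ s in x..(1:ℝ), fderiv ℝ f (s, y) (1, 0))
      = (∫ s in x..(1:ℝ), fderiv ℝ f (s, 1) (1, 0))
        - ∫ s in x..(1:ℝ), (∫ t in y..(1:ℝ), fderiv ℝ (fderiv ℝ f) (s, t) (0, 1) (1, 0)) := by
    have i1 : IntervalIntegrable (fun s : ℝ => fderiv ℝ f (s, 1) (1, 0)) volume x 1 :=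
      ((contA hf (1, 0)).comp (continuous_id.prodMk continuous_const)).intervalIntegrable x 1
    have i2 : IntervalIntegrable (fun s : ℝ => ∫ t in y..(1:ℝ),
        fderiv ℝ (fderiv ℝ f) (s, t) (0, 1) (1, 0)) volume x 1 := hcont2.intervalIntegrable x 1
    rw [← intervalIntegral.integral_sub i1 i2]
    refine intervalIntegral.integral_congr fun s _ => ?_
    rw [hB s]; ring
  rw [h3] at h2
  linarith [h1, h2]

end Calc

section Fub

lemma fub_marg (μ : Measure (ℝ × ℝ)) [IsFiniteMeasure μ] (g : ℝ → ℝ) (hg : Continuous g)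
    (e : ℝ × ℝ → ℝ) (he : Measurable e) :
    ∫ p, (∫ s in Icc (0:ℝ) 1, (Ioi (e p)).indicator g s) ∂μ
      = ∫ s in Icc (0:ℝ) 1, g s * (μ {p | e p < s}).toReal := by
  set ν : Measure ℝ := volume.restrict (Icc (0:ℝ) 1) with hν
  have hSmeas : MeasurableSet {q : (ℝ × ℝ) × ℝ | e q.1 < q.2} :=
    measurableSet_lt (he.comp measurable_fst) measurable_snd
  have hmeas : AEStronglyMeasurable
      (Function.uncurry fun (p : ℝ × ℝ) (s : ℝ) => (Ioi (e p)).indicator g s) (μ.prod ν) := by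
    have : (Function.uncurry fun (p : ℝ × ℝ) (s : ℝ) => (Ioi (e p)).indicator g s)
        = {q : (ℝ × ℝ) × ℝ | e q.1 < q.2}.indicator (fun q => g q.2) := by
      funext q
      by_cases h : e q.1 < q.2 <;>
        simp [Function.uncurry, Set.indicator, h, mem_Ioi]
    rw [this]
    exact ((hg.measurable.comp measurable_snd).indicator hSmeas).aestronglyMeasurable
  obtain ⟨Cb, hCb⟩ := isCompact_Icc.exists_bound_of_continuousOn
    (hg.continuousOn : ContinuousOn g (Icc (0:ℝ) 1))
  have hae : ∀ᵐ q : (ℝ × ℝ) × ℝ ∂(μ.prod ν), q.2 ∈ Icc (0:ℝ) 1 := by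
    rw [ae_iff]
    have : {q : (ℝ × ℝ) × ℝ | ¬ q.2 ∈ Icc (0:ℝ) 1} = univ ×ˢ (Icc (0:ℝ) 1)ᶜ := by
      ext q; simp
    rw [this, Measure.prod_prod]
    have : ν (Icc (0:ℝ) 1)ᶜ = 0 := by
      rw [hν, Measure.restrict_apply (measurableSet_Icc.compl)]
      simp
    rw [this, mul_zero]
  have hint : Integrable
      (Function.uncurry fun (p : ℝ × ℝ) (s : ℝ) => (Ioi (e p)).indicator g s) (μ.prod ν) := by
    refine Integrable.mono' (integrable_const Cb) hmeas ?_
    filter_upwards [hae] with q hq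
    calc ‖(Ioi (e q.1)).indicator g q.2‖ ≤ ‖g q.2‖ := norm_indicator_le_norm_self g q.2
      _ ≤ Cb := hCb q.2 hq
  have hswap := MeasureTheory.integral_integral_swap hint
  rw [hswap]
  refine setIntegral_congr_fun measurableSet_Icc fun s hs => ?_
  have : (fun p : ℝ × ℝ => (Ioi (e p)).indicator g s)
      = {p : ℝ × ℝ | e p < s}.indicator (fun _ => g s) := by
    funext p
    by_cases h : e p < s <;> simp [Set.indicator, h, mem_Ioi]
  rw [this, integral_indicator_const _ (measurableSet_lt he measurable_const)]
  simp [mul_comm, Measure.real]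

lemma fub_double (μ : Measure (ℝ × ℝ)) [IsFiniteMeasure μ] (g : ℝ × ℝ → ℝ) (hg : Continuous g) :
    ∫ p, (∫ z in Icc (0:ℝ) 1 ×ˢ Icc (0:ℝ) 1, ((Ioi p.1 ×ˢ Ioi p.2).indicator g) z) ∂μ
      = ∫ z in Icc (0:ℝ) 1 ×ˢ Icc (0:ℝ) 1,
          g z * (μ {p : ℝ × ℝ | p.1 < z.1 ∧ p.2 < z.2}).toReal := by
  set Q : Set (ℝ × ℝ) := Icc (0:ℝ) 1 ×ˢ Icc (0:ℝ) 1 with hQ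
  set ν : Measure (ℝ × ℝ) := volume.restrict Q with hν
  have hQc : IsCompact Q := isCompact_Icc.prod isCompact_Icc
  have hSmeas : MeasurableSet {q : (ℝ × ℝ) × (ℝ × ℝ) | q.1.1 < q.2.1 ∧ q.1.2 < q.2.2} := by
    exact (measurableSet_lt (measurable_fst.fst) (measurable_snd.fst)).inter
      (measurableSet_lt (measurable_fst.snd) (measurable_snd.snd))
  have hmeas : AEStronglyMeasurable
      (Function.uncurry fun (p : ℝ × ℝ) (z : ℝ × ℝ) => (Ioi p.1 ×ˢ Ioi p.2).indicator g z)
      (μ.prod ν) := by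
    have : (Function.uncurry fun (p : ℝ × ℝ) (z : ℝ × ℝ) => (Ioi p.1 ×ˢ Ioi p.2).indicator g z)
        = {q : (ℝ × ℝ) × (ℝ × ℝ) | q.1.1 < q.2.1 ∧ q.1.2 < q.2.2}.indicator (fun q => g q.2) := by
      funext q
      by_cases h : q.1.1 < q.2.1 ∧ q.1.2 < q.2.2 <;>
        simp [Function.uncurry, Set.indicator, h, Set.mem_prod, mem_Ioi]
    rw [this]
    exact ((hg.measurable.comp measurable_snd).indicator hSmeas).aestronglyMeasurable
  obtain ⟨Cb, hCb⟩ := hQc.exists_bound_of_continuousOn (hg.continuousOn : ContinuousOn g Q)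
  have hae : ∀ᵐ q : (ℝ × ℝ) × (ℝ × ℝ) ∂(μ.prod ν), q.2 ∈ Q := by
    rw [ae_iff]
    have h1 : {q : (ℝ × ℝ) × (ℝ × ℝ) | ¬ q.2 ∈ Q} = univ ×ˢ Qᶜ := by ext q; simp
    rw [h1, Measure.prod_prod]
    have : ν Qᶜ = 0 := by
      rw [hν, Measure.restrict_apply ((hQc.isClosed.measurableSet).compl)]
      simp
    rw [this, mul_zero]
  haveI : IsFiniteMeasure ν := ⟨by
    rw [Measure.restrict_apply_univ]; exact hQc.measure_lt_top⟩
  have hint : Integrable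
      (Function.uncurry fun (p : ℝ × ℝ) (z : ℝ × ℝ) => (Ioi p.1 ×ˢ Ioi p.2).indicator g z)
      (μ.prod ν) := by
    refine Integrable.mono' (integrable_const Cb) hmeas ?_
    filter_upwards [hae] with q hq
    calc ‖(Ioi q.1.1 ×ˢ Ioi q.1.2).indicator g q.2‖ ≤ ‖g q.2‖ :=
        norm_indicator_le_norm_self g q.2
      _ ≤ Cb := hCb q.2 hq
  have hswap := MeasureTheory.integral_integral_swap hint
  rw [hswap]
  refine setIntegral_congr_fun (hQc.isClosed.measurableSet) fun z hz => ?_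
  have : (fun p : ℝ × ℝ => (Ioi p.1 ×ˢ Ioi p.2).indicator g z)
      = {p : ℝ × ℝ | p.1 < z.1 ∧ p.2 < z.2}.indicator (fun _ => g z) := by
    funext p
    by_cases h : p.1 < z.1 ∧ p.2 < z.2 <;> simp [Set.indicator, h, Set.mem_prod, mem_Ioi]
  have hSm : MeasurableSet {p : ℝ × ℝ | p.1 < z.1 ∧ p.2 < z.2} :=
    (measurableSet_lt measurable_fst measurable_const).inter
      (measurableSet_lt measurable_snd measurable_const)
  rw [this, integral_indicator_const _ hSm]
  simp [mul_comm, Measure.real]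


lemma hIccIoi {a : ℝ} (ha : 0 ≤ a) : Icc (0:ℝ) 1 ∩ Ioi a = Ioc a 1 := by
  ext u
  simp only [mem_inter_iff, mem_Icc, mem_Ioi, mem_Ioc]
  constructor
  · rintro ⟨⟨_, h1⟩, h2⟩; exact ⟨h2, h1⟩
  · rintro ⟨h2, h1⟩; exact ⟨⟨le_trans ha h2.le, h1⟩, h2⟩

lemma reprμ {f : ℝ × ℝ → ℝ} (hf : ContDiff ℝ 2 f) (μ : Measure (ℝ × ℝ))
    [IsProbabilityMeasure μ] (hac : μ ≪ volume)
    (hs : μ (Icc ((0, 0) : ℝ × ℝ) (1, 1))ᶜ = 0) :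
    ∫ p, f p ∂μ = f (1, 1)
      - (∫ s in Icc (0:ℝ) 1, fderiv ℝ f (s, 1) (1, 0) * (μ (Iic ((s, 1) : ℝ × ℝ))).toReal)
      - (∫ t in Icc (0:ℝ) 1, fderiv ℝ f (1, t) (0, 1) * (μ (Iic ((1, t) : ℝ × ℝ))).toReal)
      + ∫ z in Icc (0:ℝ) 1 ×ˢ Icc (0:ℝ) 1,
          fderiv ℝ (fderiv ℝ f) z (0, 1) (1, 0) * (μ (Iic z)).toReal := by
  set K : Set (ℝ × ℝ) := Icc ((0, 0) : ℝ × ℝ) (1, 1) with hK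
  set A : ℝ → ℝ := fun s => fderiv ℝ f (s, 1) (1, 0) with hA'
  set B : ℝ → ℝ := fun t => fderiv ℝ f (1, t) (0, 1) with hB'
  set C : ℝ × ℝ → ℝ := fun z => fderiv ℝ (fderiv ℝ f) z (0, 1) (1, 0) with hC'
  have hA : Continuous A := (contA hf (1, 0)).comp (continuous_id.prodMk continuous_const)
  have hB : Continuous B := (contA hf (0, 1)).comp (continuous_const.prodMk continuous_id)
  have hC : Continuous C := contC hf (0, 1) (1, 0)
  have hKmem : ∀ᵐ p ∂μ, p ∈ K := by
    rw [ae_iff]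
    exact hs
  have hμK : μ.restrict K = μ := Measure.restrict_eq_self_of_ae_mem hKmem
  -- null lines
  have hline1 : ∀ a : ℝ, μ {p : ℝ × ℝ | p.1 = a} = 0 := by
    intro a
    apply hac
    have h1 : {p : ℝ × ℝ | p.1 = a} = {a} ×ˢ (univ : Set ℝ) := by
      ext p
      simp only [mem_setOf_eq, Set.mem_prod, mem_singleton_iff, mem_univ, and_true]
    rw [h1, Measure.volume_eq_prod, Measure.prod_prod]
    simp
  have hline2 : ∀ a : ℝ, μ {p : ℝ × ℝ | p.2 = a} = 0 := by
    intro a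
    apply hac
    have h1 : {p : ℝ × ℝ | p.2 = a} = (univ : Set ℝ) ×ˢ {a} := by
      ext p
      simp only [mem_setOf_eq, Set.mem_prod, mem_singleton_iff, mem_univ, true_and]
    rw [h1, Measure.volume_eq_prod, Measure.prod_prod]
    simp
  have hm1 : ∀ a : ℝ, μ {p : ℝ × ℝ | p.1 < a} = μ (Iic ((a, 1) : ℝ × ℝ)) := by
    intro a
    apply measure_congr
    rw [ae_eq_set]
    constructor
    · refine measure_mono_null (fun p hp => ?_) hs
      simp only [mem_diff, mem_setOf_eq, mem_Iic, Prod.le_def, not_and_or, not_le] at hp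
      simp only [mem_compl_iff, hK, mem_Icc, Prod.le_def, not_and_or, not_le]
      rcases hp.2 with h | h
      · exact absurd hp.1 (not_lt.2 h.le)
      · exact Or.inr (Or.inr h)
    · refine measure_mono_null (fun p hp => ?_) (hline1 a)
      simp only [mem_diff, mem_Iic, Prod.le_def, mem_setOf_eq, not_lt] at hp
      exact le_antisymm hp.1.1 hp.2
  have hm2 : ∀ a : ℝ, μ {p : ℝ × ℝ | p.2 < a} = μ (Iic ((1, a) : ℝ × ℝ)) := by
    intro a
    apply measure_congr
    rw [ae_eq_set]
    constructor
    · refine measure_mono_null (fun p hp => ?_) hs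
      simp only [mem_diff, mem_setOf_eq, mem_Iic, Prod.le_def, not_and_or, not_le] at hp
      simp only [mem_compl_iff, hK, mem_Icc, Prod.le_def, not_and_or, not_le]
      rcases hp.2 with h | h
      · exact Or.inr (Or.inl h)
      · exact absurd hp.1 (not_lt.2 h.le)
    · refine measure_mono_null (fun p hp => ?_) (hline2 a)
      simp only [mem_diff, mem_Iic, Prod.le_def, mem_setOf_eq, not_lt] at hp
      exact le_antisymm hp.1.2 hp.2
  have hm3 : ∀ z : ℝ × ℝ, μ {p : ℝ × ℝ | p.1 < z.1 ∧ p.2 < z.2} = μ (Iic z) := by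
    intro z
    apply measure_congr
    rw [ae_eq_set]
    constructor
    · refine measure_mono_null (fun p hp => ?_) (measure_empty (μ := μ))
      exfalso
      simp only [mem_diff, mem_setOf_eq, mem_Iic, Prod.le_def, not_and_or, not_le] at hp
      rcases hp.2 with h | h
      · exact absurd hp.1.1 (not_lt.2 h.le)
      · exact absurd hp.1.2 (not_lt.2 h.le)
    · refine measure_mono_null (fun p hp => ?_)
        (measure_union_null (hline1 z.1) (hline2 z.2))
      simp only [mem_diff, mem_Iic, Prod.le_def, mem_setOf_eq, not_and_or, not_lt] at hp
      simp only [mem_union, mem_setOf_eq]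
      rcases hp.2 with h | h
      · exact Or.inl (le_antisymm hp.1.1 h)
      · exact Or.inr (le_antisymm hp.1.2 h)
  -- the three integral terms as functions of p
  set T2 : ℝ × ℝ → ℝ := fun p => ∫ s in p.1..(1:ℝ), A s with hT2'
  set T3 : ℝ × ℝ → ℝ := fun p => ∫ t in p.2..(1:ℝ), B t with hT3'
  set T4 : ℝ × ℝ → ℝ := fun p => ∫ s in p.1..(1:ℝ), (∫ t in p.2..(1:ℝ), C (s, t)) with hT4'
  have hptf : ∀ p : ℝ × ℝ, f p = f (1, 1) - T2 p - T3 p + T4 p := by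
    intro p
    have := pointwise hf p.1 p.2
    simpa using this
  -- continuity of the terms
  have hT2c : Continuous T2 := by
    have h1 : Continuous fun p : ℝ × ℝ => ∫ s in (1:ℝ)..p.1, A s :=
      intervalIntegral.continuous_parametric_intervalIntegral_of_continuous
        (f := fun (_ : ℝ × ℝ) (s : ℝ) => A s) (hA.comp continuous_snd) continuous_fst
    have h2 : T2 = fun p => -(∫ s in (1:ℝ)..p.1, A s) := by
      funext p
      rw [hT2', ← intervalIntegral.integral_symm]
    rw [h2]
    exact h1.neg
  have hT3c : Continuous T3 := by
    have h1 : Continuous fun p : ℝ × ℝ => ∫ t in (1:ℝ)..p.2, B t :=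
      intervalIntegral.continuous_parametric_intervalIntegral_of_continuous
        (f := fun (_ : ℝ × ℝ) (t : ℝ) => B t) (hB.comp continuous_snd) continuous_snd
    have h2 : T3 = fun p => -(∫ t in (1:ℝ)..p.2, B t) := by
      funext p
      rw [hT3', ← intervalIntegral.integral_symm]
    rw [h2]
    exact h1.neg
  have hinnc : Continuous (Function.uncurry fun (p : ℝ × ℝ) (s : ℝ) =>
      ∫ t in p.2..(1:ℝ), C (s, t)) := by
    have h1 : Continuous fun q : (ℝ × ℝ) × ℝ => ∫ t in (1:ℝ)..q.1.2, C (q.2, t) :=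
      intervalIntegral.continuous_parametric_intervalIntegral_of_continuous
        (f := fun (q : (ℝ × ℝ) × ℝ) (t : ℝ) => C (q.2, t))
        (hC.comp ((continuous_snd.comp continuous_fst).prodMk continuous_snd))
        (continuous_snd.comp continuous_fst)
    have h2 : (Function.uncurry fun (p : ℝ × ℝ) (s : ℝ) => ∫ t in p.2..(1:ℝ), C (s, t))
        = fun q : (ℝ × ℝ) × ℝ => -(∫ t in (1:ℝ)..q.1.2, C (q.2, t)) := by
      funext q
      rw [Function.uncurry, ← intervalIntegral.integral_symm]
    rw [h2]
    exact h1.neg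
  have hT4c : Continuous T4 := by
    have h1 : Continuous fun p : ℝ × ℝ => ∫ s in (1:ℝ)..p.1, (∫ t in p.2..(1:ℝ), C (s, t)) :=
      intervalIntegral.continuous_parametric_intervalIntegral_of_continuous
        (f := fun (p : ℝ × ℝ) (s : ℝ) => ∫ t in p.2..(1:ℝ), C (s, t)) hinnc continuous_fst
    have h2 : T4 = fun p => -(∫ s in (1:ℝ)..p.1, (∫ t in p.2..(1:ℝ), C (s, t))) := by
      funext p
      rw [hT4', ← intervalIntegral.integral_symm]
    rw [h2]
    exact h1.neg
  -- integrability with respect to μ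
  have hKcomp : IsCompact K := isCompact_Icc
  have hint : ∀ (g : ℝ × ℝ → ℝ), Continuous g → Integrable g μ := by
    intro g hg
    rw [← hμK]
    exact hg.continuousOn.integrableOn_compact hKcomp
  have hT2int : Integrable T2 μ := hint T2 hT2c
  have hT3int : Integrable T3 μ := hint T3 hT3c
  have hT4int : Integrable T4 μ := hint T4 hT4c
  -- split the integral
  have hsplit : ∫ p, f p ∂μ = f (1, 1) - (∫ p, T2 p ∂μ) - (∫ p, T3 p ∂μ) + ∫ p, T4 p ∂μ := by
    have h0 : ∫ p, f p ∂μ = ∫ p, (f (1, 1) - T2 p - T3 p + T4 p) ∂μ :=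
      integral_congr_ae (Filter.Eventually.of_forall hptf)
    have e1 : ∫ p, (f (1, 1) - T2 p - T3 p + T4 p) ∂μ
        = (∫ p, (f (1, 1) - T2 p - T3 p) ∂μ) + ∫ p, T4 p ∂μ :=
      integral_add (((integrable_const _).sub hT2int).sub hT3int) hT4int
    have e2 : ∫ p, (f (1, 1) - T2 p - T3 p) ∂μ
        = (∫ p, (f (1, 1) - T2 p) ∂μ) - ∫ p, T3 p ∂μ :=
      integral_sub ((integrable_const _).sub hT2int) hT3int
    have e3 : ∫ p, (f (1, 1) - T2 p) ∂μ
        = (∫ _p : ℝ × ℝ, f (1, 1) ∂μ) - ∫ p, T2 p ∂μ :=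
      integral_sub (integrable_const _) hT2int
    have e4 : (∫ _p : ℝ × ℝ, f (1, 1) ∂μ) = f (1, 1) := by
      simp [integral_const]
    rw [h0, e1, e2, e3, e4]
  -- value of term 2
  have hT2val : ∫ p, T2 p ∂μ
      = ∫ s in Icc (0:ℝ) 1, A s * (μ (Iic ((s, 1) : ℝ × ℝ))).toReal := by
    have step1 : ∫ p, T2 p ∂μ
        = ∫ p, (∫ s in Icc (0:ℝ) 1, (Ioi p.1).indicator A s) ∂μ := by
      refine integral_congr_ae ?_
      filter_upwards [hKmem] with p hp
      have h01 : 0 ≤ p.1 ∧ p.1 ≤ 1 := by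
        rw [hK, mem_Icc, Prod.le_def, Prod.le_def] at hp
        exact ⟨hp.1.1, hp.2.1⟩
      rw [setIntegral_indicator measurableSet_Ioi, hIccIoi h01.1,
        ← intervalIntegral.integral_of_le h01.2]
    rw [step1, fub_marg μ A hA Prod.fst measurable_fst]
    refine setIntegral_congr_fun measurableSet_Icc fun s _ => ?_
    rw [hm1 s]
  -- value of term 3
  have hT3val : ∫ p, T3 p ∂μ
      = ∫ t in Icc (0:ℝ) 1, B t * (μ (Iic ((1, t) : ℝ × ℝ))).toReal := by
    have step1 : ∫ p, T3 p ∂μ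
        = ∫ p, (∫ t in Icc (0:ℝ) 1, (Ioi p.2).indicator B t) ∂μ := by
      refine integral_congr_ae ?_
      filter_upwards [hKmem] with p hp
      have h01 : 0 ≤ p.2 ∧ p.2 ≤ 1 := by
        rw [hK, mem_Icc, Prod.le_def, Prod.le_def] at hp
        exact ⟨hp.1.2, hp.2.2⟩
      rw [setIntegral_indicator measurableSet_Ioi, hIccIoi h01.1,
        ← intervalIntegral.integral_of_le h01.2]
    rw [step1, fub_marg μ B hB Prod.snd measurable_snd]
    refine setIntegral_congr_fun measurableSet_Icc fun t _ => ?_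
    rw [hm2 t]
  -- value of term 4
  have hT4val : ∫ p, T4 p ∂μ
      = ∫ z in Icc (0:ℝ) 1 ×ˢ Icc (0:ℝ) 1, C z * (μ (Iic z)).toReal := by
    have step1 : ∫ p, T4 p ∂μ
        = ∫ p, (∫ z in Icc (0:ℝ) 1 ×ˢ Icc (0:ℝ) 1,
            ((Ioi p.1 ×ˢ Ioi p.2).indicator C) z) ∂μ := by
      refine integral_congr_ae ?_
      filter_upwards [hKmem] with p hp
      have h01 : (0 ≤ p.1 ∧ p.1 ≤ 1) ∧ (0 ≤ p.2 ∧ p.2 ≤ 1) := by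
        rw [hK, mem_Icc, Prod.le_def, Prod.le_def] at hp
        exact ⟨⟨hp.1.1, hp.2.1⟩, ⟨hp.1.2, hp.2.2⟩⟩
      rw [setIntegral_indicator (measurableSet_Ioi.prod measurableSet_Ioi),
        prod_inter_prod, hIccIoi h01.1.1, hIccIoi h01.2.1]
      have hCi : IntegrableOn C (Ioc p.1 1 ×ˢ Ioc p.2 1) (volume.prod volume) := by
        have h1 : IntegrableOn C (Icc ((p.1, p.2) : ℝ × ℝ) ((1, 1) : ℝ × ℝ)) volume :=
          hC.continuousOn.integrableOn_compact isCompact_Icc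
        rw [Measure.volume_eq_prod] at h1
        refine h1.mono_set ?_
        rw [Icc_prod_eq]
        exact prod_mono Ioc_subset_Icc_self Ioc_subset_Icc_self
      rw [Measure.volume_eq_prod, setIntegral_prod _ hCi,
        ← intervalIntegral.integral_of_le h01.1.2]
      refine intervalIntegral.integral_congr fun s _ => ?_
      rw [← intervalIntegral.integral_of_le h01.2.2]
    rw [step1, fub_double μ C hC]
    refine setIntegral_congr_fun (measurableSet_Icc.prod measurableSet_Icc) fun z _ => ?_
    rw [hm3 z]
  rw [hsplit, hT2val, hT3val, hT4val]

end Fub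

theorem first_order_dominance_submodular_absolutely_continuous
    (μ₁ μ₂ : Measure (ℝ × ℝ)) [IsProbabilityMeasure μ₁] [IsProbabilityMeasure μ₂]
    (hac₁ : μ₁ ≪ volume) (hac₂ : μ₂ ≪ volume)
    (hs₁ : μ₁ (Icc ((0, 0) : ℝ × ℝ) (1, 1))ᶜ = 0)
    (hs₂ : μ₂ (Icc ((0, 0) : ℝ × ℝ) (1, 1))ᶜ = 0)
    (F₁ F₂ : ℝ → ℝ → ℝ)
    (hF₁ : ∀ s t : ℝ, F₁ s t = (μ₁ (Iic ((s, t) : ℝ × ℝ))).toReal)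
    (hF₂ : ∀ s t : ℝ, F₂ s t = (μ₂ (Iic ((s, t) : ℝ × ℝ))).toReal)
    (hF₁c : ContDiff ℝ 1 (fun p : ℝ × ℝ => F₁ p.1 p.2))
    (hF₂c : ContDiff ℝ 1 (fun p : ℝ × ℝ => F₂ p.1 p.2))
    (hle : ∀ s ∈ Icc (0 : ℝ) 1, ∀ t ∈ Icc (0 : ℝ) 1, F₁ s t ≤ F₂ s t)
    (φ : ℝ → ℝ → ℝ)
    (hφ : ContDiff ℝ 2 (fun p : ℝ × ℝ => φ p.1 p.2))
    (hφx : ∀ s ∈ Icc (0 : ℝ) 1, ∀ t ∈ Icc (0 : ℝ) 1,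
      0 ≤ deriv (fun s' => φ s' t) s)
    (hφy : ∀ s ∈ Icc (0 : ℝ) 1, ∀ t ∈ Icc (0 : ℝ) 1,
      0 ≤ deriv (fun t' => φ s t') t)
    (hφxy : ∀ s ∈ Icc (0 : ℝ) 1, ∀ t ∈ Icc (0 : ℝ) 1,
      deriv (fun t' => deriv (fun s' => φ s' t') s) t ≤ 0) :
    ∫ p, φ p.1 p.2 ∂μ₁ ≥ ∫ p, φ p.1 p.2 ∂μ₂ := by
  have h11 : (1 : ℝ) ∈ Icc (0:ℝ) 1 := ⟨zero_le_one, le_rfl⟩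
  -- sign facts
  have hA0 : ∀ s ∈ Icc (0:ℝ) 1, 0 ≤ fderiv ℝ (fun p : ℝ × ℝ => φ p.1 p.2) (s, 1) (1, 0) := by
    intro s hs
    have hd := (slice1 hφ s 1).deriv
    rw [← hd]
    exact hφx s hs 1 h11
  have hB0 : ∀ t ∈ Icc (0:ℝ) 1, 0 ≤ fderiv ℝ (fun p : ℝ × ℝ => φ p.1 p.2) (1, t) (0, 1) := by
    intro t ht
    have hd := (slice2 hφ 1 t).deriv
    rw [← hd]
    exact hφy 1 h11 t ht
  have hC0 : ∀ z ∈ Icc (0:ℝ) 1 ×ˢ Icc (0:ℝ) 1,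
      fderiv ℝ (fderiv ℝ (fun p : ℝ × ℝ => φ p.1 p.2)) z (0, 1) (1, 0) ≤ 0 := by
    intro z hz
    have h1 : (fun t' => deriv (fun s' => φ s' t') z.1)
        = fun t' => fderiv ℝ (fun p : ℝ × ℝ => φ p.1 p.2) (z.1, t') (1, 0) :=
      funext fun t' => (slice1 hφ z.1 t').deriv
    have h2 := (sliceA hφ z.1 z.2).deriv
    have h3 := hφxy z.1 hz.1 z.2 hz.2
    rw [h1, h2] at h3
    exact h3
  -- representations
  have R1 := reprμ hφ μ₁ hac₁ hs₁
  have R2 := reprμ hφ μ₂ hac₂ hs₂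
  -- rewrite in terms of F₁, F₂
  have hc1 : ∀ (μ : Measure (ℝ × ℝ)) (F : ℝ → ℝ → ℝ)
      (hF : ∀ s t : ℝ, F s t = (μ (Iic ((s, t) : ℝ × ℝ))).toReal),
      ((fun s : ℝ => fderiv ℝ (fun p : ℝ × ℝ => φ p.1 p.2) (s, 1) (1, 0)
          * (μ (Iic ((s, 1) : ℝ × ℝ))).toReal)
        = fun s : ℝ => fderiv ℝ (fun p : ℝ × ℝ => φ p.1 p.2) (s, 1) (1, 0) * F s 1)
      ∧ ((fun t : ℝ => fderiv ℝ (fun p : ℝ × ℝ => φ p.1 p.2) (1, t) (0, 1)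
          * (μ (Iic ((1, t) : ℝ × ℝ))).toReal)
        = fun t : ℝ => fderiv ℝ (fun p : ℝ × ℝ => φ p.1 p.2) (1, t) (0, 1) * F 1 t)
      ∧ ((fun z : ℝ × ℝ => fderiv ℝ (fderiv ℝ (fun p : ℝ × ℝ => φ p.1 p.2)) z (0, 1) (1, 0)
          * (μ (Iic z)).toReal)
        = fun z : ℝ × ℝ => fderiv ℝ (fderiv ℝ (fun p : ℝ × ℝ => φ p.1 p.2)) z (0, 1) (1, 0)
          * F z.1 z.2) := by
    intro μ F hF
    refine ⟨funext fun s => by rw [hF s 1], funext fun t => by rw [hF 1 t],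
      funext fun z => by rw [hF z.1 z.2]⟩
  obtain ⟨e21, e31, e41⟩ := hc1 μ₁ F₁ hF₁
  obtain ⟨e22, e32, e42⟩ := hc1 μ₂ F₂ hF₂
  rw [e21, e31, e41] at R1
  rw [e22, e32, e42] at R2
  -- continuity facts
  have hAc : Continuous fun s : ℝ => fderiv ℝ (fun p : ℝ × ℝ => φ p.1 p.2) (s, 1) (1, 0) :=
    (contA hφ (1, 0)).comp (continuous_id.prodMk continuous_const)
  have hBc : Continuous fun t : ℝ => fderiv ℝ (fun p : ℝ × ℝ => φ p.1 p.2) (1, t) (0, 1) :=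
    (contA hφ (0, 1)).comp (continuous_const.prodMk continuous_id)
  have hCc : Continuous fun z : ℝ × ℝ =>
      fderiv ℝ (fderiv ℝ (fun p : ℝ × ℝ => φ p.1 p.2)) z (0, 1) (1, 0) := contC hφ (0, 1) (1, 0)
  have hF1s : Continuous fun s : ℝ => F₁ s 1 :=
    hF₁c.continuous.comp (continuous_id.prodMk continuous_const)
  have hF2s : Continuous fun s : ℝ => F₂ s 1 :=
    hF₂c.continuous.comp (continuous_id.prodMk continuous_const)
  have hF1t : Continuous fun t : ℝ => F₁ 1 t :=
    hF₁c.continuous.comp (continuous_const.prodMk continuous_id)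
  have hF2t : Continuous fun t : ℝ => F₂ 1 t :=
    hF₂c.continuous.comp (continuous_const.prodMk continuous_id)
  -- the three comparisons
  have I2 : (∫ s in Icc (0:ℝ) 1, fderiv ℝ (fun p : ℝ × ℝ => φ p.1 p.2) (s, 1) (1, 0) * F₁ s 1)
      ≤ ∫ s in Icc (0:ℝ) 1, fderiv ℝ (fun p : ℝ × ℝ => φ p.1 p.2) (s, 1) (1, 0) * F₂ s 1 := by
    refine setIntegral_mono_on ((hAc.mul hF1s).continuousOn.integrableOn_compact isCompact_Icc)
      ((hAc.mul hF2s).continuousOn.integrableOn_compact isCompact_Icc) measurableSet_Icc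
      fun s hs => ?_
    exact mul_le_mul_of_nonneg_left (hle s hs 1 h11) (hA0 s hs)
  have I3 : (∫ t in Icc (0:ℝ) 1, fderiv ℝ (fun p : ℝ × ℝ => φ p.1 p.2) (1, t) (0, 1) * F₁ 1 t)
      ≤ ∫ t in Icc (0:ℝ) 1, fderiv ℝ (fun p : ℝ × ℝ => φ p.1 p.2) (1, t) (0, 1) * F₂ 1 t := by
    refine setIntegral_mono_on ((hBc.mul hF1t).continuousOn.integrableOn_compact isCompact_Icc)
      ((hBc.mul hF2t).continuousOn.integrableOn_compact isCompact_Icc) measurableSet_Icc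
      fun t ht => ?_
    exact mul_le_mul_of_nonneg_left (hle 1 h11 t ht) (hB0 t ht)
  have I4 : (∫ z in Icc (0:ℝ) 1 ×ˢ Icc (0:ℝ) 1,
        fderiv ℝ (fderiv ℝ (fun p : ℝ × ℝ => φ p.1 p.2)) z (0, 1) (1, 0) * F₂ z.1 z.2)
      ≤ ∫ z in Icc (0:ℝ) 1 ×ˢ Icc (0:ℝ) 1,
        fderiv ℝ (fderiv ℝ (fun p : ℝ × ℝ => φ p.1 p.2)) z (0, 1) (1, 0) * F₁ z.1 z.2 := by
    refine setIntegral_mono_on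
      ((hCc.mul hF₂c.continuous).continuousOn.integrableOn_compact
        (isCompact_Icc.prod isCompact_Icc))
      ((hCc.mul hF₁c.continuous).continuousOn.integrableOn_compact
        (isCompact_Icc.prod isCompact_Icc))
      (measurableSet_Icc.prod measurableSet_Icc) fun z hz => ?_
    exact mul_le_mul_of_nonpos_left (hle z.1 hz.1 z.2 hz.2) (hC0 z hz)
  rw [ge_iff_le, R1, R2]
  linarith [I2, I3, I4]
end

section
/- Let F₁, F₂ be C¹ CDFs of absolutely continuous distributions on [0,1]². If F₁^X ≤ F₂^X, F₁^Y ≤ F₂^Y pointwise and K₁ ≤ K₂ pointwise where Kₖ(s,t) = Fₖ^X(s) + Fₖ^Y(t) - Fₖ(s,t), then E₁[φ] ≥ E₂[φ] for every C² function φ with φ_x ≥ 0, φ_y ≥ 0, φ_{xy} ≥ 0. -/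
open Set MeasureTheory

namespace FODSAC
noncomputable section

def Phi (φ : ℝ → ℝ → ℝ) : ℝ × ℝ → ℝ := fun p => φ p.1 p.2
def ps (φ : ℝ → ℝ → ℝ) (s t : ℝ) : ℝ := fderiv ℝ (Phi φ) (s, t) (1, 0)
def pt (φ : ℝ → ℝ → ℝ) (s t : ℝ) : ℝ := fderiv ℝ (Phi φ) (s, t) (0, 1)
def pst (φ : ℝ → ℝ → ℝ) (s t : ℝ) : ℝ :=
  fderiv ℝ (fun p => fderiv ℝ (Phi φ) p (1, 0)) (s, t) (0, 1)

variable {φ : ℝ → ℝ → ℝ}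

lemma hPhid (hφ : ContDiff ℝ 2 (Phi φ)) : Differentiable ℝ (Phi φ) :=
  hφ.differentiable (by norm_num)

lemma hA (hφ : ContDiff ℝ 2 (Phi φ)) : ContDiff ℝ 1 (fderiv ℝ (Phi φ)) :=
  hφ.fderiv_right (by norm_num)

lemma hasDerivAt_ps (hφ : ContDiff ℝ 2 (Phi φ)) (s t : ℝ) :
    HasDerivAt (fun s' => φ s' t) (ps φ s t) s := by
  have h1 : HasDerivAt (fun s' : ℝ => ((s', t) : ℝ × ℝ)) (1, 0) s :=
    (hasDerivAt_id s).prodMk (hasDerivAt_const s t)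
  exact (hPhid hφ (s, t)).hasFDerivAt.comp_hasDerivAt s h1

lemma hasDerivAt_pt (hφ : ContDiff ℝ 2 (Phi φ)) (s t : ℝ) :
    HasDerivAt (fun t' => φ s t') (pt φ s t) t := by
  have h1 : HasDerivAt (fun t' : ℝ => ((s, t') : ℝ × ℝ)) (0, 1) t :=
    (hasDerivAt_const t s).prodMk (hasDerivAt_id t)
  exact (hPhid hφ (s, t)).hasFDerivAt.comp_hasDerivAt t h1

lemma hg1 (hφ : ContDiff ℝ 2 (Phi φ)) :
    ContDiff ℝ 1 (fun p : ℝ × ℝ => fderiv ℝ (Phi φ) p (1, 0)) :=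
  (hA hφ).clm_apply contDiff_const

lemma hasDerivAt_pst (hφ : ContDiff ℝ 2 (Phi φ)) (s t : ℝ) :
    HasDerivAt (fun t' => ps φ s t') (pst φ s t) t := by
  have h1 : HasDerivAt (fun t' : ℝ => ((s, t') : ℝ × ℝ)) (0, 1) t :=
    (hasDerivAt_const t s).prodMk (hasDerivAt_id t)
  exact (((hg1 hφ).differentiable one_ne_zero) (s, t)).hasFDerivAt.comp_hasDerivAt t h1

lemma hasDerivAt_pst' (hφ : ContDiff ℝ 2 (Phi φ)) (s t : ℝ) :
    HasDerivAt (fun s' => pt φ s' t) (pst φ s t) s := by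
  have hgt : ContDiff ℝ 1 (fun p : ℝ × ℝ => fderiv ℝ (Phi φ) p (0, 1)) :=
    (hA hφ).clm_apply contDiff_const
  have h1 : HasDerivAt (fun s' : ℝ => ((s', t) : ℝ × ℝ)) (1, 0) s :=
    (hasDerivAt_id s).prodMk (hasDerivAt_const s t)
  have h2 := ((hgt.differentiable one_ne_zero) (s, t)).hasFDerivAt.comp_hasDerivAt s h1
  have hAd : DifferentiableAt ℝ (fderiv ℝ (Phi φ)) (s, t) :=
    ((hA hφ).differentiable one_ne_zero) (s, t)
  have e1 : fderiv ℝ (fun p : ℝ × ℝ => fderiv ℝ (Phi φ) p ((0 : ℝ), (1 : ℝ))) (s, t) (1, 0)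
      = fderiv ℝ (fderiv ℝ (Phi φ)) (s, t) ((1 : ℝ), (0 : ℝ)) (0, 1) := by
    rw [fderiv_clm_apply hAd (differentiableAt_const _)]
    simp
  have e2 : pst φ s t = fderiv ℝ (fderiv ℝ (Phi φ)) (s, t) ((0 : ℝ), (1 : ℝ)) (1, 0) := by
    rw [pst, fderiv_clm_apply hAd (differentiableAt_const _)]
    simp
  have hsymm := second_derivative_symmetric (f := Phi φ) (f' := fderiv ℝ (Phi φ))
    (fun y => (hPhid hφ y).hasFDerivAt) hAd.hasFDerivAt
    ((1 : ℝ), (0 : ℝ)) ((0 : ℝ), (1 : ℝ))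
  have : fderiv ℝ (fun p : ℝ × ℝ => fderiv ℝ (Phi φ) p ((0 : ℝ), (1 : ℝ))) (s, t) (1, 0)
      = pst φ s t := by rw [e1, e2, hsymm]
  rw [← this]
  exact h2

lemma deriv_eq_ps (hφ : ContDiff ℝ 2 (Phi φ)) (s t : ℝ) :
    deriv (fun s' => φ s' t) s = ps φ s t := (hasDerivAt_ps hφ s t).deriv

lemma deriv_eq_pt (hφ : ContDiff ℝ 2 (Phi φ)) (s t : ℝ) :
    deriv (fun t' => φ s t') t = pt φ s t := (hasDerivAt_pt hφ s t).deriv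

lemma deriv_eq_pst (hφ : ContDiff ℝ 2 (Phi φ)) (s t : ℝ) :
    deriv (fun t' => deriv (fun s' => φ s' t') s) t = pst φ s t := by
  have : (fun t' => deriv (fun s' => φ s' t') s) = fun t' => ps φ s t' :=
    funext fun t' => deriv_eq_ps hφ s t'
  rw [this]
  exact (hasDerivAt_pst hφ s t).deriv

lemma cont_ps (hφ : ContDiff ℝ 2 (Phi φ)) : Continuous fun q : ℝ × ℝ => ps φ q.1 q.2 := by
  have := (hg1 hφ).continuous
  exact this.comp (continuous_id)

lemma cont_pt (hφ : ContDiff ℝ 2 (Phi φ)) : Continuous fun q : ℝ × ℝ => pt φ q.1 q.2 := by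
  have : ContDiff ℝ 1 (fun p : ℝ × ℝ => fderiv ℝ (Phi φ) p (0, 1)) :=
    (hA hφ).clm_apply contDiff_const
  exact this.continuous

lemma cont_pst (hφ : ContDiff ℝ 2 (Phi φ)) : Continuous fun q : ℝ × ℝ => pst φ q.1 q.2 := by
  have h0 : ContDiff ℝ 0 (fderiv ℝ (fun p : ℝ × ℝ => fderiv ℝ (Phi φ) p (1, 0))) :=
    (hg1 hφ).fderiv_right (by norm_num)
  exact h0.continuous.clm_apply continuous_const


lemma cont_ps1 (hφ : ContDiff ℝ 2 (Phi φ)) (t : ℝ) : Continuous fun s => ps φ s t :=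
  (cont_ps hφ).comp (continuous_id.prodMk continuous_const)

lemma cont_pt1 (hφ : ContDiff ℝ 2 (Phi φ)) (s : ℝ) : Continuous fun t => pt φ s t :=
  (cont_pt hφ).comp (continuous_const.prodMk continuous_id)

lemma cont_pt1' (hφ : ContDiff ℝ 2 (Phi φ)) (t : ℝ) : Continuous fun s => pt φ s t :=
  (cont_pt hφ).comp (continuous_id.prodMk continuous_const)

lemma cont_pst_t (hφ : ContDiff ℝ 2 (Phi φ)) (s : ℝ) : Continuous fun t => pst φ s t :=
  (cont_pst hφ).comp (continuous_const.prodMk continuous_id)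

lemma cont_pst_s (hφ : ContDiff ℝ 2 (Phi φ)) (t : ℝ) : Continuous fun s => pst φ s t :=
  (cont_pst hφ).comp (continuous_id.prodMk continuous_const)

lemma ftc_s (hφ : ContDiff ℝ 2 (Phi φ)) (x t : ℝ) :
    ∫ s in x..1, ps φ s t = φ 1 t - φ x t :=
  intervalIntegral.integral_eq_sub_of_hasDerivAt (fun u _ => hasDerivAt_ps hφ u t)
    ((cont_ps1 hφ t).intervalIntegrable x 1)

lemma ftc_t (hφ : ContDiff ℝ 2 (Phi φ)) (s y : ℝ) :
    ∫ t in y..1, pt φ s t = φ s 1 - φ s y :=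
  intervalIntegral.integral_eq_sub_of_hasDerivAt (fun u _ => hasDerivAt_pt hφ s u)
    ((cont_pt1 hφ s).intervalIntegrable y 1)

lemma ftc_pst_t (hφ : ContDiff ℝ 2 (Phi φ)) (s y : ℝ) :
    ∫ t in y..1, pst φ s t = ps φ s 1 - ps φ s y :=
  intervalIntegral.integral_eq_sub_of_hasDerivAt (fun u _ => hasDerivAt_pst hφ s u)
    ((cont_pst_t hφ s).intervalIntegrable y 1)

lemma ftc_pst_s (hφ : ContDiff ℝ 2 (Phi φ)) (t x : ℝ) :
    ∫ s in x..1, pst φ s t = pt φ 1 t - pt φ x t :=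
  intervalIntegral.integral_eq_sub_of_hasDerivAt (fun u _ => hasDerivAt_pst' hφ u t)
    ((cont_pst_s hφ t).intervalIntegrable x 1)

lemma pointwise_id (hφ : ContDiff ℝ 2 (Phi φ)) (x y : ℝ) :
    φ x y = φ 1 1 - (∫ s in x..1, ps φ s 1) - (∫ t in y..1, pt φ 1 t)
      + ∫ s in x..1, ∫ t in y..1, pst φ s t := by
  have h1 := ftc_s hφ x 1
  have h2 := ftc_t hφ 1 y
  have h3 : (∫ s in x..1, ∫ t in y..1, pst φ s t)
      = (φ 1 1 - φ 1 y) - (φ x 1 - φ x y) := by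
    have hc : ∀ s ∈ uIcc x 1, (∫ t in y..1, pst φ s t) = ps φ s 1 - ps φ s y :=
      fun s _ => ftc_pst_t hφ s y
    rw [intervalIntegral.integral_congr hc]
    have hd : ∀ u ∈ uIcc x 1, HasDerivAt (fun s' => φ s' 1 - φ s' y)
        (ps φ u 1 - ps φ u y) u :=
      fun u _ => (hasDerivAt_ps hφ u 1).sub (hasDerivAt_ps hφ u y)
    have := intervalIntegral.integral_eq_sub_of_hasDerivAt hd
      (((cont_ps1 hφ 1).sub (cont_ps1 hφ y)).intervalIntegrable x 1)
    rw [this]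
  linarith


-- measure-theoretic helpers

lemma le_meas {μ : Measure (ℝ × ℝ)} {S T N : Set (ℝ × ℝ)} (h : S ⊆ T ∪ N)
    (hN : μ N = 0) : μ S ≤ μ T := by
  calc μ S ≤ μ (T ∪ N) := measure_mono h
    _ ≤ μ T + μ N := measure_union_le _ _
    _ = μ T := by rw [hN, add_zero]

lemma null_vline (a : ℝ) : (volume : Measure (ℝ × ℝ)) {p | p.1 = a} = 0 := by
  have : {p : ℝ × ℝ | p.1 = a} = ({a} : Set ℝ) ×ˢ (univ : Set ℝ) := by
    ext p
    simp only [mem_setOf_eq, mem_prod, mem_singleton_iff, mem_univ, and_true]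
  rw [this, Measure.volume_eq_prod, Measure.prod_prod]
  simp

lemma null_hline (b : ℝ) : (volume : Measure (ℝ × ℝ)) {p | p.2 = b} = 0 := by
  have : {p : ℝ × ℝ | p.2 = b} = (univ : Set ℝ) ×ˢ ({b} : Set ℝ) := by
    ext p
    simp only [mem_setOf_eq, mem_prod, mem_singleton_iff, mem_univ, true_and]
  rw [this, Measure.volume_eq_prod, Measure.prod_prod]
  simp

variable {μ : Measure (ℝ × ℝ)}

lemma meas_lt_fst (hac : μ ≪ volume) (hs : μ (Icc ((0, 0) : ℝ × ℝ) (1, 1))ᶜ = 0)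
    (a : ℝ) : μ {p : ℝ × ℝ | p.1 < a} = μ (Iic ((a, 1) : ℝ × ℝ)) := by
  apply le_antisymm
  · refine le_meas (N := (Icc ((0, 0) : ℝ × ℝ) (1, 1))ᶜ) ?_ hs
    intro p hp
    by_cases hK : p ∈ Icc ((0, 0) : ℝ × ℝ) (1, 1)
    · left
      exact ⟨le_of_lt hp, hK.2.2⟩
    · right; exact hK
  · refine le_meas (N := {p : ℝ × ℝ | p.1 = a}) ?_ (hac (null_vline a))
    intro p hp
    rcases lt_or_eq_of_le (hp.1 : p.1 ≤ a) with h | h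
    · left; exact h
    · right; exact h

lemma meas_lt_snd (hac : μ ≪ volume) (hs : μ (Icc ((0, 0) : ℝ × ℝ) (1, 1))ᶜ = 0)
    (b : ℝ) : μ {p : ℝ × ℝ | p.2 < b} = μ (Iic ((1, b) : ℝ × ℝ)) := by
  apply le_antisymm
  · refine le_meas (N := (Icc ((0, 0) : ℝ × ℝ) (1, 1))ᶜ) ?_ hs
    intro p hp
    by_cases hK : p ∈ Icc ((0, 0) : ℝ × ℝ) (1, 1)
    · left
      exact ⟨hK.2.1, le_of_lt hp⟩
    · right; exact hK
  · refine le_meas (N := {p : ℝ × ℝ | p.2 = b}) ?_ (hac (null_hline b))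
    intro p hp
    rcases lt_or_eq_of_le (hp.2 : p.2 ≤ b) with h | h
    · left; exact h
    · right; exact h

lemma meas_lt_both (hac : μ ≪ volume) (a b : ℝ) :
    μ (Iio a ×ˢ Iio b) = μ (Iic ((a, b) : ℝ × ℝ)) := by
  apply le_antisymm
  · apply measure_mono
    intro p hp
    exact ⟨le_of_lt hp.1, le_of_lt hp.2⟩
  · have hN : μ ({p : ℝ × ℝ | p.1 = a} ∪ {p : ℝ × ℝ | p.2 = b}) = 0 := by
      refine le_antisymm ?_ zero_le
      calc μ _ ≤ μ {p : ℝ × ℝ | p.1 = a} + μ {p : ℝ × ℝ | p.2 = b} := measure_union_le _ _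
        _ = 0 := by rw [hac (null_vline a), hac (null_hline b), add_zero]
    refine le_meas ?_ hN
    intro p hp
    rcases lt_or_eq_of_le (hp.1 : p.1 ≤ a) with h1 | h1
    · rcases lt_or_eq_of_le (hp.2 : p.2 ≤ b) with h2 | h2
      · left; exact ⟨h1, h2⟩
      · right; right; exact h2
    · right; left; exact h1

lemma ae_mem_K {μ : Measure (ℝ × ℝ)} (hs : μ (Icc ((0, 0) : ℝ × ℝ) (1, 1))ᶜ = 0) :
    ∀ᵐ p ∂μ, p ∈ Icc ((0, 0) : ℝ × ℝ) (1, 1) := by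
  rw [ae_iff]
  convert hs using 2
  rfl

lemma integrable_of_cont (μ : Measure (ℝ × ℝ)) [IsFiniteMeasure μ]
    (hs : μ (Icc ((0, 0) : ℝ × ℝ) (1, 1))ᶜ = 0) (f : ℝ × ℝ → ℝ) (hf : Continuous f) :
    Integrable f μ := by
  obtain ⟨C, hC⟩ := (isCompact_Icc (a := ((0, 0) : ℝ × ℝ)) (b := (1, 1))).exists_bound_of_continuousOn
    hf.continuousOn
  refine (integrable_const C).mono' hf.aestronglyMeasurable ?_
  filter_upwards [ae_mem_K hs] with p hp using hC p hp

lemma intOn_I {f : ℝ → ℝ} (hf : Continuous f) :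
    IntegrableOn f (Ioc (0 : ℝ) 1) := by
  exact ((hf.continuousOn).integrableOn_compact (isCompact_Icc (a := (0:ℝ)) (b := 1))).mono_set
    Ioc_subset_Icc_self

lemma intOn_I2 {f : ℝ × ℝ → ℝ} (hf : Continuous f) :
    IntegrableOn f (Ioc (0 : ℝ) 1 ×ˢ Ioc (0 : ℝ) 1) := by
  refine ((hf.continuousOn).integrableOn_compact
    (isCompact_Icc (a := ((0, 0) : ℝ × ℝ)) (b := (1, 1)))).mono_set ?_
  rw [← Icc_prod_Icc]
  exact prod_mono Ioc_subset_Icc_self Ioc_subset_Icc_self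

lemma finI : IsFiniteMeasure ((volume : Measure ℝ).restrict (Ioc (0 : ℝ) 1)) := by
  constructor
  rw [Measure.restrict_apply_univ, Real.volume_Ioc]
  norm_num


-- product-space machinery

def nuI : Measure ℝ := (volume : Measure ℝ).restrict (Ioc (0 : ℝ) 1)

instance : IsFiniteMeasure nuI := finI

lemma nuIc : nuI (Ioc (0 : ℝ) 1)ᶜ = 0 := by
  rw [nuI, Measure.restrict_apply measurableSet_Ioc.compl, compl_inter_self]
  exact measure_empty

lemma nu2_eq : nuI.prod nuI
    = (volume : Measure (ℝ × ℝ)).restrict (Ioc (0 : ℝ) 1 ×ˢ Ioc (0 : ℝ) 1) := by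
  rw [nuI, Measure.prod_restrict, ← Measure.volume_eq_prod]

lemma nu2c : (nuI.prod nuI) (Ioc (0 : ℝ) 1 ×ˢ Ioc (0 : ℝ) 1)ᶜ = 0 := by
  rw [nu2_eq, Measure.restrict_apply (measurableSet_Ioc.prod measurableSet_Ioc).compl,
    compl_inter_self]
  exact measure_empty

lemma ae_snd_mem {α β : Type*} [MeasurableSpace α] [MeasurableSpace β]
    (μ : Measure α) (ρ : Measure β) [SFinite μ] [SFinite ρ] {A : Set β}
    (hA : MeasurableSet A) (h0 : ρ Aᶜ = 0) :
    ∀ᵐ x : α × β ∂(μ.prod ρ), x.2 ∈ A := by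
  rw [ae_iff]
  have hset : {x : α × β | ¬ x.2 ∈ A} = Prod.snd ⁻¹' Aᶜ := rfl
  rw [hset, ← Measure.map_apply measurable_snd hA.compl, Measure.map_snd_prod]
  simp [h0]

def G1 (φ : ℝ → ℝ → ℝ) : (ℝ × ℝ) × ℝ → ℝ :=
  fun x => if x.1.1 < x.2 then ps φ x.2 1 else 0

def G2 (φ : ℝ → ℝ → ℝ) : (ℝ × ℝ) × ℝ → ℝ :=
  fun x => if x.1.2 < x.2 then pt φ 1 x.2 else 0

def G3 (φ : ℝ → ℝ → ℝ) : (ℝ × ℝ) × (ℝ × ℝ) → ℝ :=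
  fun x => if x.1.1 < x.2.1 ∧ x.1.2 < x.2.2 then pst φ x.2.1 x.2.2 else 0

lemma intG1 (hφ : ContDiff ℝ 2 (Phi φ)) (μ : Measure (ℝ × ℝ)) [IsFiniteMeasure μ] :
    Integrable (G1 φ) (μ.prod nuI) := by
  obtain ⟨C, hC⟩ := (isCompact_Icc (a := (0 : ℝ)) (b := 1)).exists_bound_of_continuousOn
    (cont_ps1 hφ 1).continuousOn
  refine (integrable_const (max C 0)).mono' ?_ ?_
  · exact (Measurable.ite (measurableSet_lt measurable_fst.fst measurable_snd)
      ((cont_ps1 hφ 1).measurable.comp measurable_snd) measurable_const).aestronglyMeasurable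
  · filter_upwards [ae_snd_mem μ nuI measurableSet_Ioc nuIc] with x hx
    by_cases h : x.1.1 < x.2
    · simp only [G1, if_pos h]
      exact (hC x.2 (Ioc_subset_Icc_self hx)).trans (le_max_left _ _)
    · simp only [G1, if_neg h, norm_zero]
      exact le_max_right _ _

lemma intG2 (hφ : ContDiff ℝ 2 (Phi φ)) (μ : Measure (ℝ × ℝ)) [IsFiniteMeasure μ] :
    Integrable (G2 φ) (μ.prod nuI) := by
  obtain ⟨C, hC⟩ := (isCompact_Icc (a := (0 : ℝ)) (b := 1)).exists_bound_of_continuousOn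
    (cont_pt1 hφ 1).continuousOn
  refine (integrable_const (max C 0)).mono' ?_ ?_
  · exact (Measurable.ite (measurableSet_lt measurable_fst.snd measurable_snd)
      ((cont_pt1 hφ 1).measurable.comp measurable_snd) measurable_const).aestronglyMeasurable
  · filter_upwards [ae_snd_mem μ nuI measurableSet_Ioc nuIc] with x hx
    by_cases h : x.1.2 < x.2
    · simp only [G2, if_pos h]
      exact (hC x.2 (Ioc_subset_Icc_self hx)).trans (le_max_left _ _)
    · simp only [G2, if_neg h, norm_zero]
      exact le_max_right _ _

lemma mem_Icc2_of_mem_prod {q : ℝ × ℝ} (hq : q ∈ Ioc (0 : ℝ) 1 ×ˢ Ioc (0 : ℝ) 1) :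
    q ∈ Icc ((0, 0) : ℝ × ℝ) (1, 1) := by
  rw [← Icc_prod_Icc]
  exact ⟨Ioc_subset_Icc_self hq.1, Ioc_subset_Icc_self hq.2⟩

lemma intG3 (hφ : ContDiff ℝ 2 (Phi φ)) (μ : Measure (ℝ × ℝ)) [IsFiniteMeasure μ] :
    Integrable (G3 φ) (μ.prod (nuI.prod nuI)) := by
  obtain ⟨C, hC⟩ := (isCompact_Icc (a := ((0, 0) : ℝ × ℝ)) (b := (1, 1))).exists_bound_of_continuousOn
    (cont_pst hφ).continuousOn
  refine (integrable_const (max C 0)).mono' ?_ ?_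
  · exact (Measurable.ite ((measurableSet_lt measurable_fst.fst measurable_snd.fst).inter
      (measurableSet_lt measurable_fst.snd measurable_snd.snd))
      ((cont_pst hφ).measurable.comp measurable_snd) measurable_const).aestronglyMeasurable
  · filter_upwards [ae_snd_mem μ (nuI.prod nuI)
      (measurableSet_Ioc.prod measurableSet_Ioc) nu2c] with x hx
    by_cases h : x.1.1 < x.2.1 ∧ x.1.2 < x.2.2
    · simp only [G3, if_pos h]
      exact (hC x.2 (mem_Icc2_of_mem_prod hx)).trans (le_max_left _ _)
    · simp only [G3, if_neg h, norm_zero]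
      exact le_max_right _ _

lemma intG3slice (hφ : ContDiff ℝ 2 (Phi φ)) (p : ℝ × ℝ) :
    Integrable (fun q => G3 φ (p, q)) (nuI.prod nuI) := by
  obtain ⟨C, hC⟩ := (isCompact_Icc (a := ((0, 0) : ℝ × ℝ)) (b := (1, 1))).exists_bound_of_continuousOn
    (cont_pst hφ).continuousOn
  refine (integrable_const (max C 0)).mono' ?_ ?_
  · refine (Measurable.ite (p := fun q : ℝ × ℝ => p.1 < q.1 ∧ p.2 < q.2) ?_
      (cont_pst hφ).measurable measurable_const).aestronglyMeasurable
    exact (measurableSet_lt measurable_const measurable_fst).inter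
      (measurableSet_lt measurable_const measurable_snd)
  · have hae : ∀ᵐ q : ℝ × ℝ ∂(nuI.prod nuI), q ∈ Ioc (0 : ℝ) 1 ×ˢ Ioc (0 : ℝ) 1 := by
      rw [nu2_eq]
      exact ae_restrict_mem (measurableSet_Ioc.prod measurableSet_Ioc)
    filter_upwards [hae] with q hq
    by_cases h : p.1 < q.1 ∧ p.2 < q.2
    · simp only [G3, if_pos h]
      exact (hC q (mem_Icc2_of_mem_prod hq)).trans (le_max_left _ _)
    · simp only [G3, if_neg h, norm_zero]
      exact le_max_right _ _


variable {F : ℝ → ℝ → ℝ}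

lemma innerG1 (hac : μ ≪ volume) (hs : μ (Icc ((0, 0) : ℝ × ℝ) (1, 1))ᶜ = 0)
    [IsFiniteMeasure μ]
    (hF : ∀ s t : ℝ, F s t = (μ (Iic ((s, t) : ℝ × ℝ))).toReal) (s : ℝ) :
    ∫ p, G1 φ (p, s) ∂μ = ps φ s 1 * F s 1 := by
  have h1 : (fun p : ℝ × ℝ => G1 φ (p, s))
      = ({p : ℝ × ℝ | p.1 < s}).indicator (fun _ => ps φ s 1) := by
    funext p
    simp [G1, indicator_apply, mem_setOf_eq]
  rw [h1, integral_indicator_const _ (measurableSet_lt measurable_fst measurable_const),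
    measureReal_def, meas_lt_fst hac hs s, smul_eq_mul, ← hF s 1, mul_comm]

lemma innerG2 (hac : μ ≪ volume) (hs : μ (Icc ((0, 0) : ℝ × ℝ) (1, 1))ᶜ = 0)
    [IsFiniteMeasure μ]
    (hF : ∀ s t : ℝ, F s t = (μ (Iic ((s, t) : ℝ × ℝ))).toReal) (t : ℝ) :
    ∫ p, G2 φ (p, t) ∂μ = pt φ 1 t * F 1 t := by
  have h1 : (fun p : ℝ × ℝ => G2 φ (p, t))
      = ({p : ℝ × ℝ | p.2 < t}).indicator (fun _ => pt φ 1 t) := by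
    funext p
    simp [G2, indicator_apply, mem_setOf_eq]
  rw [h1, integral_indicator_const _ (measurableSet_lt measurable_snd measurable_const),
    measureReal_def, meas_lt_snd hac hs t, smul_eq_mul, ← hF 1 t, mul_comm]

lemma innerG3 (hac : μ ≪ volume) [IsFiniteMeasure μ]
    (hF : ∀ s t : ℝ, F s t = (μ (Iic ((s, t) : ℝ × ℝ))).toReal) (q : ℝ × ℝ) :
    ∫ p, G3 φ (p, q) ∂μ = pst φ q.1 q.2 * F q.1 q.2 := by
  have h1 : (fun p : ℝ × ℝ => G3 φ (p, q))
      = (Iio q.1 ×ˢ Iio q.2).indicator (fun _ => pst φ q.1 q.2) := by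
    funext p
    simp [G3, indicator_apply, mem_prod, mem_Iio]
  rw [h1, integral_indicator_const _ (measurableSet_Iio.prod measurableSet_Iio),
    measureReal_def, meas_lt_both hac q.1 q.2, smul_eq_mul, ← hF q.1 q.2, mul_comm]

lemma sliceG1 (hφ : ContDiff ℝ 2 (Phi φ)) {p : ℝ × ℝ}
    (hp : p ∈ Icc ((0, 0) : ℝ × ℝ) (1, 1)) :
    ∫ s, G1 φ (p, s) ∂nuI = ∫ s in p.1..1, ps φ s 1 := by
  have h1 : (fun s => G1 φ (p, s)) = (Ioi p.1).indicator (fun s => ps φ s 1) := by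
    funext s
    simp [G1, indicator_apply, mem_Ioi]
  rw [h1, nuI, integral_indicator measurableSet_Ioi,
    Measure.restrict_restrict measurableSet_Ioi]
  have h2 : Ioi p.1 ∩ Ioc (0 : ℝ) 1 = Ioc p.1 1 := by
    ext s
    constructor
    · rintro ⟨hs1, hs2⟩
      exact ⟨hs1, hs2.2⟩
    · rintro ⟨hs1, hs2⟩
      exact ⟨hs1, lt_of_le_of_lt hp.1.1 hs1, hs2⟩
  rw [h2]
  exact (intervalIntegral.integral_of_le hp.2.1).symm

lemma sliceG2 (hφ : ContDiff ℝ 2 (Phi φ)) {p : ℝ × ℝ}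
    (hp : p ∈ Icc ((0, 0) : ℝ × ℝ) (1, 1)) :
    ∫ t, G2 φ (p, t) ∂nuI = ∫ t in p.2..1, pt φ 1 t := by
  have h1 : (fun t => G2 φ (p, t)) = (Ioi p.2).indicator (fun t => pt φ 1 t) := by
    funext t
    simp [G2, indicator_apply, mem_Ioi]
  rw [h1, nuI, integral_indicator measurableSet_Ioi,
    Measure.restrict_restrict measurableSet_Ioi]
  have h2 : Ioi p.2 ∩ Ioc (0 : ℝ) 1 = Ioc p.2 1 := by
    ext t
    constructor
    · rintro ⟨hs1, hs2⟩
      exact ⟨hs1, hs2.2⟩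
    · rintro ⟨hs1, hs2⟩
      exact ⟨hs1, lt_of_le_of_lt hp.1.2 hs1, hs2⟩
  rw [h2]
  exact (intervalIntegral.integral_of_le hp.2.2).symm

lemma sliceG3 (hφ : ContDiff ℝ 2 (Phi φ)) {p : ℝ × ℝ}
    (hp : p ∈ Icc ((0, 0) : ℝ × ℝ) (1, 1)) :
    ∫ q, G3 φ (p, q) ∂(nuI.prod nuI) = ∫ s in p.1..1, ∫ t in p.2..1, pst φ s t := by
  rw [MeasureTheory.integral_prod _ (intG3slice hφ p)]
  have hinner : ∀ s : ℝ, (∫ t, G3 φ (p, (s, t)) ∂nuI)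
      = (Ioi p.1).indicator (fun s => ∫ t in p.2..1, pst φ s t) s := by
    intro s
    by_cases h : p.1 < s
    · rw [indicator_of_mem (mem_Ioi.2 h)]
      have h1 : (fun t => G3 φ (p, (s, t))) = (Ioi p.2).indicator (fun t => pst φ s t) := by
        funext t
        simp [G3, h, indicator_apply, mem_Ioi]
      rw [h1, nuI, integral_indicator measurableSet_Ioi,
        Measure.restrict_restrict measurableSet_Ioi]
      have h2 : Ioi p.2 ∩ Ioc (0 : ℝ) 1 = Ioc p.2 1 := by
        ext t
        constructor
        · rintro ⟨hs1, hs2⟩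
          exact ⟨hs1, hs2.2⟩
        · rintro ⟨hs1, hs2⟩
          exact ⟨hs1, lt_of_le_of_lt hp.1.2 hs1, hs2⟩
      rw [h2]
      exact (intervalIntegral.integral_of_le hp.2.2).symm
    · rw [indicator_of_notMem (by simpa using h)]
      have h1 : (fun t => G3 φ (p, (s, t))) = fun _ => 0 := by
        funext t
        simp [G3, h]
      rw [h1, integral_zero]
  simp only [hinner]
  rw [nuI, integral_indicator measurableSet_Ioi,
    Measure.restrict_restrict measurableSet_Ioi]
  have h2 : Ioi p.1 ∩ Ioc (0 : ℝ) 1 = Ioc p.1 1 := by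
    ext s
    constructor
    · rintro ⟨hs1, hs2⟩
      exact ⟨hs1, hs2.2⟩
    · rintro ⟨hs1, hs2⟩
      exact ⟨hs1, lt_of_le_of_lt hp.1.1 hs1, hs2⟩
  rw [h2]
  exact (intervalIntegral.integral_of_le hp.2.1).symm


lemma repr (μ : Measure (ℝ × ℝ)) [IsProbabilityMeasure μ] (hac : μ ≪ volume)
    (hs : μ (Icc ((0, 0) : ℝ × ℝ) (1, 1))ᶜ = 0) (F : ℝ → ℝ → ℝ)
    (hF : ∀ s t : ℝ, F s t = (μ (Iic ((s, t) : ℝ × ℝ))).toReal)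
    (hFc : Continuous fun p : ℝ × ℝ => F p.1 p.2)
    (hφ : ContDiff ℝ 2 (Phi φ)) :
    ∫ p, φ p.1 p.2 ∂μ
      = φ 1 1 - (∫ s in Ioc (0 : ℝ) 1, ps φ s 0 * F s 1)
        - (∫ t in Ioc (0 : ℝ) 1, pt φ 0 t * F 1 t)
        - ∫ q in Ioc (0 : ℝ) 1 ×ˢ Ioc (0 : ℝ) 1,
            pst φ q.1 q.2 * (F q.1 1 + F 1 q.2 - F q.1 q.2) := by
  have hFX : Continuous fun s : ℝ => F s 1 := hFc.comp (continuous_id.prodMk continuous_const)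
  have hFY : Continuous fun t : ℝ => F 1 t := hFc.comp (continuous_const.prodMk continuous_id)
  -- integrability of the three μ-functions
  have hae1 : (fun p : ℝ × ℝ => ∫ s, G1 φ (p, s) ∂nuI)
      =ᵐ[μ] fun p => ∫ s in p.1..1, ps φ s 1 := by
    filter_upwards [ae_mem_K hs] with p hp using sliceG1 hφ hp
  have hae2 : (fun p : ℝ × ℝ => ∫ t, G2 φ (p, t) ∂nuI)
      =ᵐ[μ] fun p => ∫ t in p.2..1, pt φ 1 t := by
    filter_upwards [ae_mem_K hs] with p hp using sliceG2 hφ hp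
  have hae3 : (fun p : ℝ × ℝ => ∫ q, G3 φ (p, q) ∂(nuI.prod nuI))
      =ᵐ[μ] fun p => ∫ s in p.1..1, ∫ t in p.2..1, pst φ s t := by
    filter_upwards [ae_mem_K hs] with p hp using sliceG3 hφ hp
  have hInt1 : Integrable (fun p : ℝ × ℝ => ∫ s in p.1..1, ps φ s 1) μ :=
    ((intG1 hφ μ).integral_prod_left).congr hae1
  have hInt2 : Integrable (fun p : ℝ × ℝ => ∫ t in p.2..1, pt φ 1 t) μ :=
    ((intG2 hφ μ).integral_prod_left).congr hae2
  have hInt3 : Integrable (fun p : ℝ × ℝ => ∫ s in p.1..1, ∫ t in p.2..1, pst φ s t) μ :=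
    ((intG3 hφ μ).integral_prod_left).congr hae3
  -- step 1 : rewrite the integrand pointwise and split
  have hrw : (fun p : ℝ × ℝ => φ p.1 p.2)
      = fun p : ℝ × ℝ => φ 1 1 - (∫ s in p.1..1, ps φ s 1) - (∫ t in p.2..1, pt φ 1 t)
        + ∫ s in p.1..1, ∫ t in p.2..1, pst φ s t :=
    funext fun p => pointwise_id hφ p.1 p.2
  rw [hrw]
  have e0 : ∫ p : ℝ × ℝ, (((φ 1 1 - ∫ s in p.1..1, ps φ s 1) - ∫ t in p.2..1, pt φ 1 t)
        + ∫ s in p.1..1, ∫ t in p.2..1, pst φ s t) ∂μ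
      = (∫ p : ℝ × ℝ, ((φ 1 1 - ∫ s in p.1..1, ps φ s 1) - ∫ t in p.2..1, pt φ 1 t) ∂μ)
        + ∫ p : ℝ × ℝ, (∫ s in p.1..1, ∫ t in p.2..1, pst φ s t) ∂μ :=
    integral_add (((integrable_const (φ 1 1)).sub hInt1).sub hInt2) hInt3
  have e1 : ∫ p : ℝ × ℝ, ((φ 1 1 - ∫ s in p.1..1, ps φ s 1) - ∫ t in p.2..1, pt φ 1 t) ∂μ
      = (∫ p : ℝ × ℝ, (φ 1 1 - ∫ s in p.1..1, ps φ s 1) ∂μ)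
        - ∫ p : ℝ × ℝ, (∫ t in p.2..1, pt φ 1 t) ∂μ :=
    integral_sub ((integrable_const (φ 1 1)).sub hInt1) hInt2
  have e2 : ∫ p : ℝ × ℝ, (φ 1 1 - ∫ s in p.1..1, ps φ s 1) ∂μ
      = (∫ _p : ℝ × ℝ, φ 1 1 ∂μ) - ∫ p : ℝ × ℝ, (∫ s in p.1..1, ps φ s 1) ∂μ :=
    integral_sub (integrable_const (φ 1 1)) hInt1
  have e3 : ∫ _p : ℝ × ℝ, φ 1 1 ∂μ = φ 1 1 := by simp
  rw [e0, e1, e2, e3]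
  -- step 2 : compute the three integrals by Fubini
  have T1 : ∫ p, (∫ s in p.1..1, ps φ s 1) ∂μ = ∫ s in Ioc (0 : ℝ) 1, ps φ s 1 * F s 1 := by
    rw [← integral_congr_ae hae1, ← MeasureTheory.integral_prod _ (intG1 hφ μ),
      MeasureTheory.integral_prod_symm _ (intG1 hφ μ)]
    have h : ∀ s : ℝ, (∫ p, G1 φ (p, s) ∂μ) = ps φ s 1 * F s 1 := innerG1 hac hs hF
    simp only [h]
    rw [nuI]
  have T2 : ∫ p, (∫ t in p.2..1, pt φ 1 t) ∂μ = ∫ t in Ioc (0 : ℝ) 1, pt φ 1 t * F 1 t := by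
    rw [← integral_congr_ae hae2, ← MeasureTheory.integral_prod _ (intG2 hφ μ),
      MeasureTheory.integral_prod_symm _ (intG2 hφ μ)]
    have h : ∀ t : ℝ, (∫ p, G2 φ (p, t) ∂μ) = pt φ 1 t * F 1 t := innerG2 hac hs hF
    simp only [h]
    rw [nuI]
  have T3 : ∫ p, (∫ s in p.1..1, ∫ t in p.2..1, pst φ s t) ∂μ
      = ∫ q in Ioc (0 : ℝ) 1 ×ˢ Ioc (0 : ℝ) 1, pst φ q.1 q.2 * F q.1 q.2 := by
    rw [← integral_congr_ae hae3, ← MeasureTheory.integral_prod _ (intG3 hφ μ),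
      MeasureTheory.integral_prod_symm _ (intG3 hφ μ)]
    have h : ∀ q : ℝ × ℝ, (∫ p, G3 φ (p, q) ∂μ) = pst φ q.1 q.2 * F q.1 q.2 :=
      innerG3 hac hF
    simp only [h]
    rw [← nu2_eq]
  rw [T1, T2, T3]
  -- step 3 : transform T1 and T2 using the mixed partial
  have inner1 : ∀ s : ℝ, (∫ t in Ioc (0 : ℝ) 1, pst φ s t * F s 1)
      = (ps φ s 1 - ps φ s 0) * F s 1 := by
    intro s
    rw [MeasureTheory.integral_mul_const]
    congr 1
    rw [← intervalIntegral.integral_of_le zero_le_one]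
    exact ftc_pst_t hφ s 0
  have inner2 : ∀ t : ℝ, (∫ s in Ioc (0 : ℝ) 1, pst φ s t * F 1 t)
      = (pt φ 1 t - pt φ 0 t) * F 1 t := by
    intro t
    rw [MeasureTheory.integral_mul_const]
    congr 1
    rw [← intervalIntegral.integral_of_le zero_le_one]
    exact ftc_pst_s hφ t 0
  have S1 : ∫ s in Ioc (0 : ℝ) 1, ps φ s 1 * F s 1
      = (∫ s in Ioc (0 : ℝ) 1, ps φ s 0 * F s 1)
        + ∫ q in Ioc (0 : ℝ) 1 ×ˢ Ioc (0 : ℝ) 1, pst φ q.1 q.2 * F q.1 1 := by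
    have P1 : ∫ q in Ioc (0 : ℝ) 1 ×ˢ Ioc (0 : ℝ) 1, pst φ q.1 q.2 * F q.1 1
        = ∫ s in Ioc (0 : ℝ) 1, ∫ t in Ioc (0 : ℝ) 1, pst φ s t * F s 1 := by
      rw [← nu2_eq]
      have hi : Integrable (fun q : ℝ × ℝ => pst φ q.1 q.2 * F q.1 1) (nuI.prod nuI) := by
        rw [nu2_eq]
        exact intOn_I2 ((cont_pst hφ).mul (hFX.comp continuous_fst))
      have := MeasureTheory.integral_prod _ hi
      rw [this]
      simp only [nuI]
    rw [P1]
    have h2 : (fun s => ∫ t in Ioc (0 : ℝ) 1, pst φ s t * F s 1)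
        = fun s => (ps φ s 1 - ps φ s 0) * F s 1 := funext inner1
    rw [h2, ← integral_add (intOn_I (f := fun s => ps φ s 0 * F s 1) ((cont_ps1 hφ 0).mul hFX))
      (intOn_I (f := fun s => (ps φ s 1 - ps φ s 0) * F s 1) (((cont_ps1 hφ 1).sub (cont_ps1 hφ 0)).mul hFX))]
    congr 1
    funext s
    ring
  have S2 : ∫ t in Ioc (0 : ℝ) 1, pt φ 1 t * F 1 t
      = (∫ t in Ioc (0 : ℝ) 1, pt φ 0 t * F 1 t)
        + ∫ q in Ioc (0 : ℝ) 1 ×ˢ Ioc (0 : ℝ) 1, pst φ q.1 q.2 * F 1 q.2 := by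
    have P2 : ∫ q in Ioc (0 : ℝ) 1 ×ˢ Ioc (0 : ℝ) 1, pst φ q.1 q.2 * F 1 q.2
        = ∫ t in Ioc (0 : ℝ) 1, ∫ s in Ioc (0 : ℝ) 1, pst φ s t * F 1 t := by
      rw [← nu2_eq]
      have hi : Integrable (fun q : ℝ × ℝ => pst φ q.1 q.2 * F 1 q.2) (nuI.prod nuI) := by
        rw [nu2_eq]
        exact intOn_I2 ((cont_pst hφ).mul (hFY.comp continuous_snd))
      have := MeasureTheory.integral_prod_symm _ hi
      rw [this]
      simp only [nuI]
    rw [P2]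
    have h2 : (fun t => ∫ s in Ioc (0 : ℝ) 1, pst φ s t * F 1 t)
        = fun t => (pt φ 1 t - pt φ 0 t) * F 1 t := funext inner2
    rw [h2, ← integral_add (intOn_I (f := fun t => pt φ 0 t * F 1 t) ((cont_pt1 hφ 0).mul hFY))
      (intOn_I (f := fun t => (pt φ 1 t - pt φ 0 t) * F 1 t) (((cont_pt1 hφ 1).sub (cont_pt1 hφ 0)).mul hFY))]
    congr 1
    funext t
    ring
  -- step 4 : combine the three ν-integrals
  have Pcomb : ∫ q in Ioc (0 : ℝ) 1 ×ˢ Ioc (0 : ℝ) 1,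
        pst φ q.1 q.2 * (F q.1 1 + F 1 q.2 - F q.1 q.2)
      = (∫ q in Ioc (0 : ℝ) 1 ×ˢ Ioc (0 : ℝ) 1, pst φ q.1 q.2 * F q.1 1)
        + (∫ q in Ioc (0 : ℝ) 1 ×ˢ Ioc (0 : ℝ) 1, pst φ q.1 q.2 * F 1 q.2)
        - ∫ q in Ioc (0 : ℝ) 1 ×ˢ Ioc (0 : ℝ) 1, pst φ q.1 q.2 * F q.1 q.2 := by
    have ha : IntegrableOn (fun q : ℝ × ℝ => pst φ q.1 q.2 * F q.1 1)
        (Ioc (0 : ℝ) 1 ×ˢ Ioc (0 : ℝ) 1) volume :=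
      intOn_I2 ((cont_pst hφ).mul (hFX.comp continuous_fst))
    have hb : IntegrableOn (fun q : ℝ × ℝ => pst φ q.1 q.2 * F 1 q.2)
        (Ioc (0 : ℝ) 1 ×ˢ Ioc (0 : ℝ) 1) volume :=
      intOn_I2 ((cont_pst hφ).mul (hFY.comp continuous_snd))
    have hc : IntegrableOn (fun q : ℝ × ℝ => pst φ q.1 q.2 * F q.1 q.2)
        (Ioc (0 : ℝ) 1 ×ˢ Ioc (0 : ℝ) 1) volume :=
      intOn_I2 ((cont_pst hφ).mul hFc)
    have hAB : ∫ q in Ioc (0 : ℝ) 1 ×ˢ Ioc (0 : ℝ) 1,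
          (pst φ q.1 q.2 * F q.1 1 + pst φ q.1 q.2 * F 1 q.2)
        = (∫ q in Ioc (0 : ℝ) 1 ×ˢ Ioc (0 : ℝ) 1, pst φ q.1 q.2 * F q.1 1)
          + ∫ q in Ioc (0 : ℝ) 1 ×ˢ Ioc (0 : ℝ) 1, pst φ q.1 q.2 * F 1 q.2 :=
      integral_add ha hb
    have hABC : ∫ q in Ioc (0 : ℝ) 1 ×ˢ Ioc (0 : ℝ) 1,
          ((pst φ q.1 q.2 * F q.1 1 + pst φ q.1 q.2 * F 1 q.2) - pst φ q.1 q.2 * F q.1 q.2)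
        = (∫ q in Ioc (0 : ℝ) 1 ×ˢ Ioc (0 : ℝ) 1,
            (pst φ q.1 q.2 * F q.1 1 + pst φ q.1 q.2 * F 1 q.2))
          - ∫ q in Ioc (0 : ℝ) 1 ×ˢ Ioc (0 : ℝ) 1, pst φ q.1 q.2 * F q.1 q.2 :=
      integral_sub (ha.add hb) hc
    have hL : ∫ q in Ioc (0 : ℝ) 1 ×ˢ Ioc (0 : ℝ) 1,
          pst φ q.1 q.2 * (F q.1 1 + F 1 q.2 - F q.1 q.2)
        = ∫ q in Ioc (0 : ℝ) 1 ×ˢ Ioc (0 : ℝ) 1,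
          ((pst φ q.1 q.2 * F q.1 1 + pst φ q.1 q.2 * F 1 q.2) - pst φ q.1 q.2 * F q.1 q.2) := by
      congr 1
      funext q
      ring
    rw [hL, hABC, hAB]
  rw [S1, S2, Pcomb]
  ring

end
end FODSAC

open FODSAC in
theorem first_order_dominance_supermodular_absolutely_continuous
    (μ₁ μ₂ : Measure (ℝ × ℝ)) [IsProbabilityMeasure μ₁] [IsProbabilityMeasure μ₂]
    (hac₁ : μ₁ ≪ volume) (hac₂ : μ₂ ≪ volume)
    (hs₁ : μ₁ (Icc ((0, 0) : ℝ × ℝ) (1, 1))ᶜ = 0)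
    (hs₂ : μ₂ (Icc ((0, 0) : ℝ × ℝ) (1, 1))ᶜ = 0)
    (F₁ F₂ : ℝ → ℝ → ℝ)
    (hF₁ : ∀ s t : ℝ, F₁ s t = (μ₁ (Iic ((s, t) : ℝ × ℝ))).toReal)
    (hF₂ : ∀ s t : ℝ, F₂ s t = (μ₂ (Iic ((s, t) : ℝ × ℝ))).toReal)
    (hF₁c : ContDiff ℝ 1 (fun p : ℝ × ℝ => F₁ p.1 p.2))
    (hF₂c : ContDiff ℝ 1 (fun p : ℝ × ℝ => F₂ p.1 p.2))
    (hX : ∀ s ∈ Icc (0 : ℝ) 1, F₁ s 1 ≤ F₂ s 1)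
    (hY : ∀ t ∈ Icc (0 : ℝ) 1, F₁ 1 t ≤ F₂ 1 t)
    (hK : ∀ s ∈ Icc (0 : ℝ) 1, ∀ t ∈ Icc (0 : ℝ) 1,
      F₁ s 1 + F₁ 1 t - F₁ s t ≤ F₂ s 1 + F₂ 1 t - F₂ s t)
    (φ : ℝ → ℝ → ℝ)
    (hφ : ContDiff ℝ 2 (fun p : ℝ × ℝ => φ p.1 p.2))
    (hφx : ∀ s ∈ Icc (0 : ℝ) 1, ∀ t ∈ Icc (0 : ℝ) 1,
      0 ≤ deriv (fun s' => φ s' t) s)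
    (hφy : ∀ s ∈ Icc (0 : ℝ) 1, ∀ t ∈ Icc (0 : ℝ) 1,
      0 ≤ deriv (fun t' => φ s t') t)
    (hφxy : ∀ s ∈ Icc (0 : ℝ) 1, ∀ t ∈ Icc (0 : ℝ) 1,
      0 ≤ deriv (fun t' => deriv (fun s' => φ s' t') s) t) :
    ∫ p, φ p.1 p.2 ∂μ₁ ≥ ∫ p, φ p.1 p.2 ∂μ₂ := by
  have hφ' : ContDiff ℝ 2 (Phi φ) := hφ
  have R1 := repr (φ := φ) μ₁ hac₁ hs₁ F₁ hF₁ hF₁c.continuous hφ'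
  have R2 := repr (φ := φ) μ₂ hac₂ hs₂ F₂ hF₂ hF₂c.continuous hφ'
  rw [ge_iff_le, R1, R2]
  have hFX1 : Continuous fun s : ℝ => F₁ s 1 :=
    hF₁c.continuous.comp (continuous_id.prodMk continuous_const)
  have hFX2 : Continuous fun s : ℝ => F₂ s 1 :=
    hF₂c.continuous.comp (continuous_id.prodMk continuous_const)
  have hFY1 : Continuous fun t : ℝ => F₁ 1 t :=
    hF₁c.continuous.comp (continuous_const.prodMk continuous_id)
  have hFY2 : Continuous fun t : ℝ => F₂ 1 t :=
    hF₂c.continuous.comp (continuous_const.prodMk continuous_id)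
  have h1 : (∫ s in Ioc (0 : ℝ) 1, ps φ s 0 * F₁ s 1)
      ≤ ∫ s in Ioc (0 : ℝ) 1, ps φ s 0 * F₂ s 1 := by
    refine setIntegral_mono_on (intOn_I ((cont_ps1 hφ' 0).mul hFX1))
      (intOn_I ((cont_ps1 hφ' 0).mul hFX2)) measurableSet_Ioc ?_
    intro s hsI
    have hps : 0 ≤ ps φ s 0 := by
      have := hφx s (Ioc_subset_Icc_self hsI) 0 (by norm_num)
      rwa [deriv_eq_ps hφ'] at this
    exact mul_le_mul_of_nonneg_left (hX s (Ioc_subset_Icc_self hsI)) hps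
  have h2 : (∫ t in Ioc (0 : ℝ) 1, pt φ 0 t * F₁ 1 t)
      ≤ ∫ t in Ioc (0 : ℝ) 1, pt φ 0 t * F₂ 1 t := by
    refine setIntegral_mono_on (intOn_I ((cont_pt1 hφ' 0).mul hFY1))
      (intOn_I ((cont_pt1 hφ' 0).mul hFY2)) measurableSet_Ioc ?_
    intro t htI
    have hpt : 0 ≤ pt φ 0 t := by
      have := hφy 0 (by norm_num) t (Ioc_subset_Icc_self htI)
      rwa [deriv_eq_pt hφ'] at this
    exact mul_le_mul_of_nonneg_left (hY t (Ioc_subset_Icc_self htI)) hpt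
  have h3 : (∫ q in Ioc (0 : ℝ) 1 ×ˢ Ioc (0 : ℝ) 1,
        pst φ q.1 q.2 * (F₁ q.1 1 + F₁ 1 q.2 - F₁ q.1 q.2))
      ≤ ∫ q in Ioc (0 : ℝ) 1 ×ˢ Ioc (0 : ℝ) 1,
        pst φ q.1 q.2 * (F₂ q.1 1 + F₂ 1 q.2 - F₂ q.1 q.2) := by
    refine setIntegral_mono_on
      (intOn_I2 ((cont_pst hφ').mul (((hFX1.comp continuous_fst).add
        (hFY1.comp continuous_snd)).sub hF₁c.continuous)))
      (intOn_I2 ((cont_pst hφ').mul (((hFX2.comp continuous_fst).add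
        (hFY2.comp continuous_snd)).sub hF₂c.continuous)))
      (measurableSet_Ioc.prod measurableSet_Ioc) ?_
    intro q hq
    have hq1 : q.1 ∈ Icc (0 : ℝ) 1 := Ioc_subset_Icc_self hq.1
    have hq2 : q.2 ∈ Icc (0 : ℝ) 1 := Ioc_subset_Icc_self hq.2
    have hpst : 0 ≤ pst φ q.1 q.2 := by
      have := hφxy q.1 hq1 q.2 hq2
      rwa [deriv_eq_pst hφ'] at this
    exact mul_le_mul_of_nonneg_left (hK q.1 hq1 q.2 hq2) hpst
  linarith
end
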